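/- arXiv:1904.02410 — 6 statements merged into one kernel-verified Lean document; each statement's English description precedes it below -/
import Mathlib

section
/- Let Ω ⊆ ℝ² be an open set and let n : Ω → ℝ³ be twice continuously differentiable with |n(x)| = 1 for all x ∈ Ω. Suppose n is conformal, i.e. there is a constant σ ∈ {1,−1} such that ∂₂n(x) = σ n(x) × ∂₁n(x) for all x ∈ Ω. Then n satisfies the harmonic map equation: Δn(x) = −(|∂₁n(x)|² + |∂₂n(x)|²) n(x) for all x ∈ Ω. -/
open Matrix

/-- First partial derivative of a map `ℝ² → ℝ³` along the first coordinate direction. -/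
noncomputable def pd1 (f : ℝ × ℝ → (Fin 3 → ℝ)) (x : ℝ × ℝ) : Fin 3 → ℝ :=
  fderiv ℝ f x (1, 0)

/-- Second partial derivative of a map `ℝ² → ℝ³` along the second coordinate direction. -/
noncomputable def pd2 (f : ℝ × ℝ → (Fin 3 → ℝ)) (x : ℝ × ℝ) : Fin 3 → ℝ :=
  fderiv ℝ f x (0, 1)

noncomputable def crossL : (Fin 3 → ℝ) →L[ℝ] (Fin 3 → ℝ) →L[ℝ] (Fin 3 → ℝ) :=
  LinearMap.toContinuousLinearMap
    ((LinearMap.toContinuousLinearMap :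
        ((Fin 3 → ℝ) →ₗ[ℝ] (Fin 3 → ℝ)) ≃ₗ[ℝ] _).toLinearMap ∘ₗ crossProduct)

@[simp] lemma crossL_apply (u v : Fin 3 → ℝ) : crossL u v = u ⨯₃ v := by
  simp [crossL]

noncomputable def dotL : (Fin 3 → ℝ) →L[ℝ] (Fin 3 → ℝ) →L[ℝ] ℝ :=
  LinearMap.toContinuousLinearMap
    ((LinearMap.toContinuousLinearMap :
        ((Fin 3 → ℝ) →ₗ[ℝ] ℝ) ≃ₗ[ℝ] _).toLinearMap ∘ₗ
      LinearMap.mk₂ ℝ (fun u v : Fin 3 → ℝ => u ⬝ᵥ v) add_dotProduct smul_dotProduct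
        dotProduct_add dotProduct_smul)

@[simp] lemma dotL_apply (u v : Fin 3 → ℝ) : dotL u v = u ⬝ᵥ v := by
  simp [dotL]

section helpers
variable {f g : ℝ × ℝ → Fin 3 → ℝ} {x : ℝ × ℝ}

lemma diffAt_cross (hf : DifferentiableAt ℝ f x) (hg : DifferentiableAt ℝ g x) :
    DifferentiableAt ℝ (fun y => f y ⨯₃ g y) x := by
  have : (fun y => f y ⨯₃ g y) = fun y => (crossL (f y)) (g y) := by
    funext y; simp
  rw [this]
  exact (crossL.differentiable.differentiableAt.comp x hf).clm_apply hg

lemma fderiv_cross (hf : DifferentiableAt ℝ f x) (hg : DifferentiableAt ℝ g x) (v : ℝ × ℝ) :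
    fderiv ℝ (fun y => f y ⨯₃ g y) x v
      = (fderiv ℝ f x v) ⨯₃ g x + f x ⨯₃ (fderiv ℝ g x v) := by
  have h1 : (fun y => f y ⨯₃ g y) = fun y => (crossL (f y)) (g y) := by
    funext y; simp
  have h2 := ((crossL.hasFDerivAt.comp x hf.hasFDerivAt).clm_apply hg.hasFDerivAt).fderiv
  simp only [Function.comp_def] at h2
  rw [h1, h2]
  simp [add_comm]

lemma fderiv_dot (hf : DifferentiableAt ℝ f x) (hg : DifferentiableAt ℝ g x) (v : ℝ × ℝ) :
    fderiv ℝ (fun y => f y ⬝ᵥ g y) x v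
      = (fderiv ℝ f x v) ⬝ᵥ g x + f x ⬝ᵥ (fderiv ℝ g x v) := by
  have h1 : (fun y => f y ⬝ᵥ g y) = fun y => (dotL (f y)) (g y) := by
    funext y; simp
  have h2 := ((dotL.hasFDerivAt.comp x hf.hasFDerivAt).clm_apply hg.hasFDerivAt).fderiv
  simp only [Function.comp_def] at h2
  rw [h1, h2]
  simp [add_comm]

lemma fderiv_apply_const {h : ℝ × ℝ → Fin 3 → ℝ}
    (hd : DifferentiableAt ℝ (fderiv ℝ h) x) (w v : ℝ × ℝ) :
    fderiv ℝ (fun y => fderiv ℝ h y w) x v = fderiv ℝ (fderiv ℝ h) x v w := by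
  have := fderiv_clm_apply (𝕜 := ℝ) hd (differentiableAt_const w)
  rw [show (fun y => fderiv ℝ h y w) = fun y => (fderiv ℝ h y) w from rfl, this]
  simp

end helpers

lemma final_algebra (a b p : Fin 3 → ℝ) (σ : ℝ) (hσ : σ = 1 ∨ σ = -1)
    (haa : a ⬝ᵥ a = 1) (hab : a ⬝ᵥ b = 0) (hap : a ⬝ᵥ p = -(b ⬝ᵥ b)) :
    p + σ • ((σ • (a ⨯₃ b)) ⨯₃ b + a ⨯₃ (σ • (b ⨯₃ b + a ⨯₃ p)))
      = -(b ⬝ᵥ b + (σ • (a ⨯₃ b)) ⬝ᵥ (σ • (a ⨯₃ b))) • a := by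
  simp only [dotProduct, Fin.sum_univ_three] at haa hab hap
  rcases hσ with h | h <;> subst h <;> funext i <;> fin_cases i <;>
    simp [crossProduct, dotProduct, Fin.sum_univ_three] <;>
    first
    | linear_combination (b 0 - (a 0*b 0+a 1*b 1+a 2*b 2) * a 0) * hab + a 0 * hap
        + ((b 0*b 0+b 1*b 1+b 2*b 2) * a 0 - p 0) * haa
    | linear_combination (b 1 - (a 0*b 0+a 1*b 1+a 2*b 2) * a 1) * hab + a 1 * hap
        + ((b 0*b 0+b 1*b 1+b 2*b 2) * a 1 - p 1) * haa
    | linear_combination (b 2 - (a 0*b 0+a 1*b 1+a 2*b 2) * a 2) * hab + a 2 * hap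
        + ((b 0*b 0+b 1*b 1+b 2*b 2) * a 2 - p 2) * haa

/-- A conformal unit-vector field `n : Ω → S²` on an open set `Ω ⊆ ℝ²`
satisfies the harmonic map equation `Δn = -|∇n|² n`. -/
theorem conformal_implies_harmonic
    (Ω : Set (ℝ × ℝ)) (hΩ : IsOpen Ω)
    (n : ℝ × ℝ → (Fin 3 → ℝ)) (hC2 : ContDiffOn ℝ 2 n Ω)
    (hunit : ∀ x ∈ Ω, n x ⬝ᵥ n x = 1)
    (σ : ℝ) (hσ : σ = 1 ∨ σ = -1)
    (hconf : ∀ x ∈ Ω, pd2 n x = σ • (n x ⨯₃ pd1 n x)) :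
    ∀ x ∈ Ω,
      pd1 (pd1 n) x + pd2 (pd2 n) x
        = -(pd1 n x ⬝ᵥ pd1 n x + pd2 n x ⬝ᵥ pd2 n x) • n x := by
  intro x hx
  have hmem : Ω ∈ nhds x := hΩ.mem_nhds hx
  have hC2x : ContDiffAt ℝ 2 n x := hC2.contDiffAt hmem
  have hdiff : ∀ y ∈ Ω, DifferentiableAt ℝ n y := fun y hy =>
    (hC2.contDiffAt (hΩ.mem_nhds hy)).differentiableAt two_ne_zero
  have hfd : DifferentiableAt ℝ (fderiv ℝ n) x :=
    (hC2x.fderiv_right (m := 1) (by norm_num)).differentiableAt one_ne_zero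
  have hsymm : fderiv ℝ (fderiv ℝ n) x (0,1) (1,0) = fderiv ℝ (fderiv ℝ n) x (1,0) (0,1) :=
    hC2x.isSymmSndFDerivAt (by simp) (0,1) (1,0)
  have hpd1 : DifferentiableAt ℝ (pd1 n) x := by
    show DifferentiableAt ℝ (fun y => (fderiv ℝ n y) (1,0)) x
    exact hfd.clm_apply (differentiableAt_const _)
  have hdpd1 : ∀ v, fderiv ℝ (pd1 n) x v = fderiv ℝ (fderiv ℝ n) x v (1,0) :=
    fun v => fderiv_apply_const hfd (1,0) v
  have hdpd2 : ∀ v, fderiv ℝ (pd2 n) x v = fderiv ℝ (fderiv ℝ n) x v (0,1) :=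
    fun v => fderiv_apply_const hfd (0,1) v
  -- orthogonality n ⬝ ∂n = 0 on Ω
  have horth : ∀ y ∈ Ω, ∀ v : ℝ × ℝ, n y ⬝ᵥ fderiv ℝ n y v = 0 := by
    intro y hy v
    have heq : (fun z => n z ⬝ᵥ n z) =ᶠ[nhds y] fun _ => (1:ℝ) :=
      Filter.eventually_of_mem (hΩ.mem_nhds hy) hunit
    have h0 : fderiv ℝ (fun z => n z ⬝ᵥ n z) y = 0 := by
      rw [heq.fderiv_eq]; exact fderiv_const_apply 1
    have h1 := fderiv_dot (hdiff y hy) (hdiff y hy) v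
    rw [h0] at h1
    simp only [ContinuousLinearMap.zero_apply] at h1
    have hc : (fderiv ℝ n y v) ⬝ᵥ n y = n y ⬝ᵥ fderiv ℝ n y v := dotProduct_comm _ _
    linarith [h1, hc]
  -- second-order orthogonality
  have hnp : n x ⬝ᵥ fderiv ℝ (fderiv ℝ n) x (1,0) (1,0) = -(pd1 n x ⬝ᵥ pd1 n x) := by
    have heq : (fun y => n y ⬝ᵥ pd1 n y) =ᶠ[nhds x] fun _ => (0:ℝ) :=
      Filter.eventually_of_mem hmem (fun y hy => horth y hy (1,0))
    have h0 : fderiv ℝ (fun y => n y ⬝ᵥ pd1 n y) x = 0 := by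
      rw [heq.fderiv_eq]; exact fderiv_const_apply 0
    have h1 := fderiv_dot (hdiff x hx) hpd1 (1,0)
    rw [h0] at h1
    simp only [ContinuousLinearMap.zero_apply] at h1
    rw [hdpd1 (1,0)] at h1
    have hb : (fderiv ℝ n x (1,0)) ⬝ᵥ pd1 n x = pd1 n x ⬝ᵥ pd1 n x := rfl
    rw [hb] at h1
    linarith [h1]
  -- derivative of the conformality relation
  have hconf' : pd2 n =ᶠ[nhds x] fun y => σ • (n y ⨯₃ pd1 n y) :=
    Filter.eventually_of_mem hmem hconf
  have key : ∀ v : ℝ × ℝ, fderiv ℝ (fderiv ℝ n) x v (0,1)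
      = σ • ((fderiv ℝ n x v) ⨯₃ pd1 n x + n x ⨯₃ (fderiv ℝ (pd1 n) x v)) := by
    intro v
    rw [← hdpd2 v, hconf'.fderiv_eq]
    have hc : DifferentiableAt ℝ (fun y => n y ⨯₃ pd1 n y) x := diffAt_cross (hdiff x hx) hpd1
    rw [fderiv_fun_const_smul hc σ]
    simp only [ContinuousLinearMap.coe_smul', Pi.smul_apply]
    rw [fderiv_cross (hdiff x hx) hpd1 v]
  -- assemble
  have e1 : pd1 (pd1 n) x = fderiv ℝ (fderiv ℝ n) x (1,0) (1,0) := hdpd1 (1,0)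
  have e2 : pd2 (pd2 n) x
      = σ • ((pd2 n x) ⨯₃ pd1 n x
          + n x ⨯₃ (σ • (pd1 n x ⨯₃ pd1 n x + n x ⨯₃ fderiv ℝ (fderiv ℝ n) x (1,0) (1,0)))) := by
    have k2 := key (0,1)
    have k1 := key (1,0)
    have h12 : fderiv ℝ (pd1 n) x (0,1) = fderiv ℝ (fderiv ℝ n) x (1,0) (0,1) := by
      rw [hdpd1 (0,1)]; exact hsymm
    rw [k1, hdpd1 (1,0)] at h12
    have : pd2 (pd2 n) x = fderiv ℝ (fderiv ℝ n) x (0,1) (0,1) := hdpd2 (0,1)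
    rw [this, k2, h12]
    rfl
  rw [e1, e2, hconf x hx]
  exact final_algebra (n x) (pd1 n x) _ σ hσ (hunit x hx) (horth x hx (1,0)) hnp
end

section
/- Let Ω ⊆ ℝ² be an open set and let n : Ω → ℝ³ be twice continuously differentiable with |n(x)| = 1 for all x ∈ Ω, and define Q : Ω → S₀ by Q(x) = √(3/2)(n(x)⊗n(x) − (1/3)I). If n is conformal, then Q satisfies the S⁴-valued harmonic map equation: ΔQ(x) = −(|∂₁Q(x)|² + |∂₂Q(x)|²) Q(x) for all x ∈ Ω, where |·| is the Frobenius norm on matrices. -/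
open Matrix


private lemma fd_mul {f g : ℝ × ℝ → ℝ} {x : ℝ × ℝ} (hf : DifferentiableAt ℝ f x)
    (hg : DifferentiableAt ℝ g x) (v : ℝ × ℝ) :
    fderiv ℝ (fun y => f y * g y) x v = fderiv ℝ f x v * g x + f x * fderiv ℝ g x v := by
  rw [fderiv_fun_mul hf hg]
  simp only [ContinuousLinearMap.add_apply, ContinuousLinearMap.smul_apply, smul_eq_mul]
  ring

private lemma fd_add2 {f g : ℝ × ℝ → ℝ} {x : ℝ × ℝ} (hf : DifferentiableAt ℝ f x)
    (hg : DifferentiableAt ℝ g x) (v : ℝ × ℝ) :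
    fderiv ℝ (fun y => f y + g y) x v = fderiv ℝ f x v + fderiv ℝ g x v := by
  rw [fderiv_fun_add hf hg]; rfl

private lemma fd_sub2 {f g : ℝ × ℝ → ℝ} {x : ℝ × ℝ} (hf : DifferentiableAt ℝ f x)
    (hg : DifferentiableAt ℝ g x) (v : ℝ × ℝ) :
    fderiv ℝ (fun y => f y - g y) x v = fderiv ℝ f x v - fderiv ℝ g x v := by
  rw [fderiv_fun_sub hf hg]; rfl

private lemma comp_pi {f : ℝ × ℝ → Fin 3 → ℝ} {x : ℝ × ℝ} (hf : DifferentiableAt ℝ f x)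
    (i : Fin 3) :
    DifferentiableAt ℝ (fun y => f y i) x ∧
      ∀ p, fderiv ℝ (fun y => f y i) x p = fderiv ℝ f x p i := by
  have h : HasFDerivAt (fun y => f y i)
      ((ContinuousLinearMap.proj (R := ℝ) (φ := fun _ : Fin 3 => ℝ) i).comp (fderiv ℝ f x)) x :=
    (ContinuousLinearMap.proj (R := ℝ) (φ := fun _ : Fin 3 => ℝ) i).hasFDerivAt.comp x
      hf.hasFDerivAt
  exact ⟨h.differentiableAt, fun p => by rw [h.fderiv]; rfl⟩
private lemma delta_scalar (σ n0 n1 n2 u0 u1 u2 w0 w1 w2 v0 v1 v2 m0 m1 m2 W0 W1 W2 : ℝ)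
    (hS : σ * σ = 1) (hN : n0 * n0 + n1 * n1 + n2 * n2 = 1)
    (hU : n0 * u0 + n1 * u1 + n2 * u2 = 0)
    (hW : u0 * u0 + u1 * u1 + u2 * u2 + (n0 * w0 + n1 * w1 + n2 * w2) = 0)
    (hv0 : v0 = σ * (n1 * u2 - n2 * u1)) (hv1 : v1 = σ * (n2 * u0 - n0 * u2))
    (hv2 : v2 = σ * (n0 * u1 - n1 * u0))
    (hm0 : m0 = σ * ((u1 * u2 - u2 * u1) + (n1 * w2 - n2 * w1)))
    (hm1 : m1 = σ * ((u2 * u0 - u0 * u2) + (n2 * w0 - n0 * w2)))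
    (hm2 : m2 = σ * ((u0 * u1 - u1 * u0) + (n0 * w1 - n1 * w0)))
    (hW0 : W0 = σ * ((v1 * u2 - v2 * u1) + (n1 * m2 - n2 * m1)))
    (hW1 : W1 = σ * ((v2 * u0 - v0 * u2) + (n2 * m0 - n0 * m2)))
    (hW2 : W2 = σ * ((v0 * u1 - v1 * u0) + (n0 * m1 - n1 * m0))) :
    (w0 + W0 = -(2 * (u0 * u0 + u1 * u1 + u2 * u2)) * n0) ∧ (w1 + W1 = -(2 * (u0 * u0 + u1 * u1 + u2 * u2)) * n1) ∧
      (w2 + W2 = -(2 * (u0 * u0 + u1 * u1 + u2 * u2)) * n2) := by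
  subst hv0 hv1 hv2 hm0 hm1 hm2 hW0 hW1 hW2
  refine ⟨?_, ?_, ?_⟩
  · linear_combination ((n2 * u0 - n0 * u2) * u2 - (n0 * u1 - n1 * u0) * u1 + n1 * (n0 * w1 - n1 * w0) - n2 * (n2 * w0 - n0 * w2)) * hS - w0 * hN + u0 * hU + n0 * hW
  · linear_combination ((n0 * u1 - n1 * u0) * u0 - (n1 * u2 - n2 * u1) * u2 + n2 * (n1 * w2 - n2 * w1) - n0 * (n0 * w1 - n1 * w0)) * hS - w1 * hN + u1 * hU + n1 * hW
  · linear_combination ((n1 * u2 - n2 * u1) * u1 - (n2 * u0 - n0 * u2) * u0 + n0 * (n2 * w0 - n0 * w2) - n1 * (n1 * w2 - n2 * w1)) * hS - w2 * hN + u2 * hU + n2 * hW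

private lemma outer_scalar (σ n0 n1 n2 u0 u1 u2 v0 v1 v2 : ℝ)
    (hS : σ * σ = 1) (hN : n0 * n0 + n1 * n1 + n2 * n2 = 1)
    (hU : n0 * u0 + n1 * u1 + n2 * u2 = 0)
    (hv0 : v0 = σ * (n1 * u2 - n2 * u1)) (hv1 : v1 = σ * (n2 * u0 - n0 * u2))
    (hv2 : v2 = σ * (n0 * u1 - n1 * u0)) :
    (u0 * u0 + v0 * v0 = (u0 * u0 + u1 * u1 + u2 * u2) * (1 - n0 * n0)) ∧
      (u0 * u1 + v0 * v1 = (u0 * u0 + u1 * u1 + u2 * u2) * (0 - n0 * n1)) ∧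
      (u0 * u2 + v0 * v2 = (u0 * u0 + u1 * u1 + u2 * u2) * (0 - n0 * n2)) ∧
      (u1 * u0 + v1 * v0 = (u0 * u0 + u1 * u1 + u2 * u2) * (0 - n1 * n0)) ∧
      (u1 * u1 + v1 * v1 = (u0 * u0 + u1 * u1 + u2 * u2) * (1 - n1 * n1)) ∧
      (u1 * u2 + v1 * v2 = (u0 * u0 + u1 * u1 + u2 * u2) * (0 - n1 * n2)) ∧
      (u2 * u0 + v2 * v0 = (u0 * u0 + u1 * u1 + u2 * u2) * (0 - n2 * n0)) ∧
      (u2 * u1 + v2 * v1 = (u0 * u0 + u1 * u1 + u2 * u2) * (0 - n2 * n1)) ∧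
      (u2 * u2 + v2 * v2 = (u0 * u0 + u1 * u1 + u2 * u2) * (1 - n2 * n2)) := by
  subst hv0 hv1 hv2
  refine ⟨?_, ?_, ?_, ?_, ?_, ?_, ?_, ?_, ?_⟩
  · linear_combination ((n1 * u2 - n2 * u1) * (n1 * u2 - n2 * u1)) * hS + ((u0 * u0 + u1 * u1 + u2 * u2) * 1 - u0 * u0) * hN + (n0 * u0 + u0 * n0 - (n0 * u0 + n1 * u1 + n2 * u2) * 1) * hU
  · linear_combination ((n1 * u2 - n2 * u1) * (n2 * u0 - n0 * u2)) * hS + ((u0 * u0 + u1 * u1 + u2 * u2) * 0 - u0 * u1) * hN + (n0 * u1 + u0 * n1 - (n0 * u0 + n1 * u1 + n2 * u2) * 0) * hU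
  · linear_combination ((n1 * u2 - n2 * u1) * (n0 * u1 - n1 * u0)) * hS + ((u0 * u0 + u1 * u1 + u2 * u2) * 0 - u0 * u2) * hN + (n0 * u2 + u0 * n2 - (n0 * u0 + n1 * u1 + n2 * u2) * 0) * hU
  · linear_combination ((n2 * u0 - n0 * u2) * (n1 * u2 - n2 * u1)) * hS + ((u0 * u0 + u1 * u1 + u2 * u2) * 0 - u1 * u0) * hN + (n1 * u0 + u1 * n0 - (n0 * u0 + n1 * u1 + n2 * u2) * 0) * hU
  · linear_combination ((n2 * u0 - n0 * u2) * (n2 * u0 - n0 * u2)) * hS + ((u0 * u0 + u1 * u1 + u2 * u2) * 1 - u1 * u1) * hN + (n1 * u1 + u1 * n1 - (n0 * u0 + n1 * u1 + n2 * u2) * 1) * hU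
  · linear_combination ((n2 * u0 - n0 * u2) * (n0 * u1 - n1 * u0)) * hS + ((u0 * u0 + u1 * u1 + u2 * u2) * 0 - u1 * u2) * hN + (n1 * u2 + u1 * n2 - (n0 * u0 + n1 * u1 + n2 * u2) * 0) * hU
  · linear_combination ((n0 * u1 - n1 * u0) * (n1 * u2 - n2 * u1)) * hS + ((u0 * u0 + u1 * u1 + u2 * u2) * 0 - u2 * u0) * hN + (n2 * u0 + u2 * n0 - (n0 * u0 + n1 * u1 + n2 * u2) * 0) * hU
  · linear_combination ((n0 * u1 - n1 * u0) * (n2 * u0 - n0 * u2)) * hS + ((u0 * u0 + u1 * u1 + u2 * u2) * 0 - u2 * u1) * hN + (n2 * u1 + u2 * n1 - (n0 * u0 + n1 * u1 + n2 * u2) * 0) * hU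
  · linear_combination ((n0 * u1 - n1 * u0) * (n0 * u1 - n1 * u0)) * hS + ((u0 * u0 + u1 * u1 + u2 * u2) * 1 - u2 * u2) * hN + (n2 * u2 + u2 * n2 - (n0 * u0 + n1 * u1 + n2 * u2) * 1) * hU


/-- Componentwise first partial derivative of a matrix-valued map on `ℝ²`. -/
noncomputable def pdM1 (f : ℝ × ℝ → Matrix (Fin 3) (Fin 3) ℝ) (x : ℝ × ℝ) :
    Matrix (Fin 3) (Fin 3) ℝ :=
  Matrix.of fun i j => fderiv ℝ (fun y => f y i j) x (1, 0)

/-- Componentwise second partial derivative of a matrix-valued map on `ℝ²`. -/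
noncomputable def pdM2 (f : ℝ × ℝ → Matrix (Fin 3) (Fin 3) ℝ) (x : ℝ × ℝ) :
    Matrix (Fin 3) (Fin 3) ℝ :=
  Matrix.of fun i j => fderiv ℝ (fun y => f y i j) x (0, 1)

/-- Squared Frobenius norm of a 3×3 real matrix: `|A|² = tr(Aᵀ A)`. -/
noncomputable def frobSq (A : Matrix (Fin 3) (Fin 3) ℝ) : ℝ := (Aᵀ * A).trace

/-- The `Q`-tensor field `Q = √(3/2) (n ⊗ n - (1/3) I)` associated with a director field `n`. -/
noncomputable def Qtensor (n : ℝ × ℝ → (Fin 3 → ℝ)) (x : ℝ × ℝ) : Matrix (Fin 3) (Fin 3) ℝ :=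
  Real.sqrt (3 / 2) • (vecMulVec (n x) (n x) - (3 : ℝ)⁻¹ • (1 : Matrix (Fin 3) (Fin 3) ℝ))

/-- If the unit-vector field `n` is conformal, then the associated `Q`-tensor field
`Q = √(3/2)(n ⊗ n - (1/3)I)` satisfies the `S⁴`-valued harmonic map equation
`ΔQ = -(|∂₁Q|² + |∂₂Q|²) Q`. -/
theorem conformal_implies_Qtensor_harmonic
    (Ω : Set (ℝ × ℝ)) (hΩ : IsOpen Ω)
    (n : ℝ × ℝ → (Fin 3 → ℝ)) (hC2 : ContDiffOn ℝ 2 n Ω)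
    (hunit : ∀ x ∈ Ω, n x ⬝ᵥ n x = 1)
    (σ : ℝ) (hσ : σ = 1 ∨ σ = -1)
    (hconf : ∀ x ∈ Ω, pd2 n x = σ • (n x ⨯₃ pd1 n x)) :
    ∀ x ∈ Ω,
      pdM1 (pdM1 (Qtensor n)) x + pdM2 (pdM2 (Qtensor n)) x
        = -(frobSq (pdM1 (Qtensor n) x) + frobSq (pdM2 (Qtensor n) x)) • Qtensor n x := by
  intro x hx
  have hmem : Ω ∈ nhds x := hΩ.mem_nhds hx
  have hdiff : ∀ y ∈ Ω, DifferentiableAt ℝ n y := fun y hy =>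
    (hC2.contDiffAt (hΩ.mem_nhds hy)).differentiableAt two_ne_zero
  have hF : ContDiffOn ℝ 1 (fderiv ℝ n) Ω := hC2.fderiv_of_isOpen hΩ (by norm_num)
  have hFd : DifferentiableAt ℝ (fderiv ℝ n) x :=
    (hF.differentiableOn one_ne_zero).differentiableAt hmem
  have happly : ∀ p : ℝ × ℝ, HasFDerivAt (fun y => fderiv ℝ n y p)
      ((ContinuousLinearMap.apply ℝ (Fin 3 → ℝ) p).comp (fderiv ℝ (fderiv ℝ n) x)) x :=
    fun p => (ContinuousLinearMap.apply ℝ (Fin 3 → ℝ) p).hasFDerivAt.comp x hFd.hasFDerivAt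
  have hsym : ∀ p q : ℝ × ℝ, fderiv ℝ (fderiv ℝ n) x p q = fderiv ℝ (fderiv ℝ n) x q p :=
    (hC2.contDiffAt hmem).isSymmSndFDerivAt (by simp)
  -- differentiability of pd1 n, pd2 n at x
  have hpd1 : DifferentiableAt ℝ (pd1 n) x := (happly (1, 0)).differentiableAt
  have hpd2 : DifferentiableAt ℝ (pd2 n) x := (happly (0, 1)).differentiableAt
  have hfpd1 : ∀ p : ℝ × ℝ, fderiv ℝ (pd1 n) x p = fderiv ℝ (fderiv ℝ n) x p (1, 0) := by
    intro p
    have h : fderiv ℝ (pd1 n) x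
        = (ContinuousLinearMap.apply ℝ (Fin 3 → ℝ) (1, 0)).comp (fderiv ℝ (fderiv ℝ n) x) :=
      (happly (1, 0)).fderiv
    rw [h]; rfl
  have hfpd2 : ∀ p : ℝ × ℝ, fderiv ℝ (pd2 n) x p = fderiv ℝ (fderiv ℝ n) x p (0, 1) := by
    intro p
    have h : fderiv ℝ (pd2 n) x
        = (ContinuousLinearMap.apply ℝ (Fin 3 → ℝ) (0, 1)).comp (fderiv ℝ (fderiv ℝ n) x) :=
      (happly (0, 1)).fderiv
    rw [h]; rfl
  have hswap : pd2 (pd1 n) x = pd1 (pd2 n) x := by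
    have e1 : pd2 (pd1 n) x = fderiv ℝ (fderiv ℝ n) x (0, 1) (1, 0) := hfpd1 (0, 1)
    have e2 : pd1 (pd2 n) x = fderiv ℝ (fderiv ℝ n) x (1, 0) (0, 1) := hfpd2 (1, 0)
    rw [e1, e2, hsym]
  -- componentwise differentiability / derivative values
  have hdc : ∀ y ∈ Ω, ∀ i, DifferentiableAt ℝ (fun z => n z i) y :=
    fun y hy i => (comp_pi (hdiff y hy) i).1
  have hdcx : ∀ i, DifferentiableAt ℝ (fun z => n z i) x := hdc x hx
  have hd1c : ∀ i, DifferentiableAt ℝ (fun z => pd1 n z i) x := fun i => (comp_pi hpd1 i).1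
  have hd2c : ∀ i, DifferentiableAt ℝ (fun z => pd2 n z i) x := fun i => (comp_pi hpd2 i).1
  have hv1 : ∀ i, fderiv ℝ (fun z => n z i) x (1, 0) = pd1 n x i :=
    fun i => (comp_pi (hdiff x hx) i).2 (1, 0)
  have hv2 : ∀ i, fderiv ℝ (fun z => n z i) x (0, 1) = pd2 n x i :=
    fun i => (comp_pi (hdiff x hx) i).2 (0, 1)
  have hw11 : ∀ i, fderiv ℝ (fun z => pd1 n z i) x (1, 0) = pd1 (pd1 n) x i :=
    fun i => (comp_pi hpd1 i).2 (1, 0)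
  have hw22 : ∀ i, fderiv ℝ (fun z => pd2 n z i) x (0, 1) = pd2 (pd2 n) x i :=
    fun i => (comp_pi hpd2 i).2 (0, 1)
  -- entries of Q
  have hQe : ∀ y : ℝ × ℝ, ∀ i j, Qtensor n y i j
      = Real.sqrt (3 / 2) * (n y i * n y j - 3⁻¹ * (if i = j then 1 else 0)) := by
    intro y i j
    simp only [Qtensor, Matrix.smul_apply, Matrix.sub_apply, Matrix.vecMulVec_apply,
      Matrix.one_apply, smul_eq_mul]
  -- first derivatives of Q on Ω
  have hP1 : ∀ y ∈ Ω, ∀ i j, pdM1 (Qtensor n) y i j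
      = Real.sqrt (3 / 2) * (pd1 n y i * n y j + n y i * pd1 n y j) := by
    intro y hy i j
    show fderiv ℝ (fun z => Qtensor n z i j) y (1, 0) = _
    have hfe : (fun z => Qtensor n z i j) = fun z =>
        Real.sqrt (3 / 2) * (n z i * n z j)
          - Real.sqrt (3 / 2) * (3⁻¹ * (if i = j then 1 else 0)) := by
      funext z; rw [hQe]; ring
    rw [hfe, fderiv_sub_const, fderiv_const_mul ((hdc y hy i).fun_mul (hdc y hy j))]
    simp only [ContinuousLinearMap.smul_apply, smul_eq_mul]
    rw [fd_mul (hdc y hy i) (hdc y hy j), (comp_pi (hdiff y hy) i).2 (1, 0),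
      (comp_pi (hdiff y hy) j).2 (1, 0)]
    rfl
  have hP2 : ∀ y ∈ Ω, ∀ i j, pdM2 (Qtensor n) y i j
      = Real.sqrt (3 / 2) * (pd2 n y i * n y j + n y i * pd2 n y j) := by
    intro y hy i j
    show fderiv ℝ (fun z => Qtensor n z i j) y (0, 1) = _
    have hfe : (fun z => Qtensor n z i j) = fun z =>
        Real.sqrt (3 / 2) * (n z i * n z j)
          - Real.sqrt (3 / 2) * (3⁻¹ * (if i = j then 1 else 0)) := by
      funext z; rw [hQe]; ring
    rw [hfe, fderiv_sub_const, fderiv_const_mul ((hdc y hy i).fun_mul (hdc y hy j))]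
    simp only [ContinuousLinearMap.smul_apply, smul_eq_mul]
    rw [fd_mul (hdc y hy i) (hdc y hy j), (comp_pi (hdiff y hy) i).2 (0, 1),
      (comp_pi (hdiff y hy) j).2 (0, 1)]
    rfl
  -- second derivatives of Q at x
  have hPP1 : ∀ i j, pdM1 (pdM1 (Qtensor n)) x i j
      = Real.sqrt (3 / 2) * ((pd1 (pd1 n) x i * n x j + pd1 n x i * pd1 n x j)
          + (pd1 n x i * pd1 n x j + n x i * pd1 (pd1 n) x j)) := by
    intro i j
    show fderiv ℝ (fun y => pdM1 (Qtensor n) y i j) x (1, 0) = _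
    have hev : (fun y => pdM1 (Qtensor n) y i j) =ᶠ[nhds x]
        fun y => Real.sqrt (3 / 2) * (pd1 n y i * n y j + n y i * pd1 n y j) :=
      Filter.eventuallyEq_of_mem hmem fun y hy => hP1 y hy i j
    rw [hev.fderiv_eq, fderiv_const_mul (((hd1c i).fun_mul (hdcx j)).fun_add ((hdcx i).fun_mul (hd1c j)))]
    simp only [ContinuousLinearMap.smul_apply, smul_eq_mul]
    rw [fd_add2 ((hd1c i).fun_mul (hdcx j)) ((hdcx i).fun_mul (hd1c j)),
      fd_mul (hd1c i) (hdcx j), fd_mul (hdcx i) (hd1c j), hw11 i, hw11 j, hv1 i, hv1 j]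
  have hPP2 : ∀ i j, pdM2 (pdM2 (Qtensor n)) x i j
      = Real.sqrt (3 / 2) * ((pd2 (pd2 n) x i * n x j + pd2 n x i * pd2 n x j)
          + (pd2 n x i * pd2 n x j + n x i * pd2 (pd2 n) x j)) := by
    intro i j
    show fderiv ℝ (fun y => pdM2 (Qtensor n) y i j) x (0, 1) = _
    have hev : (fun y => pdM2 (Qtensor n) y i j) =ᶠ[nhds x]
        fun y => Real.sqrt (3 / 2) * (pd2 n y i * n y j + n y i * pd2 n y j) :=
      Filter.eventuallyEq_of_mem hmem fun y hy => hP2 y hy i j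
    rw [hev.fderiv_eq, fderiv_const_mul (((hd2c i).fun_mul (hdcx j)).fun_add ((hdcx i).fun_mul (hd2c j)))]
    simp only [ContinuousLinearMap.smul_apply, smul_eq_mul]
    rw [fd_add2 ((hd2c i).fun_mul (hdcx j)) ((hdcx i).fun_mul (hd2c j)),
      fd_mul (hd2c i) (hdcx j), fd_mul (hdcx i) (hd2c j), hw22 i, hw22 j, hv2 i, hv2 j]
  -- derivative of the unit-norm constraint
  have hNdot : ∀ y ∈ Ω, ∀ p : ℝ × ℝ,
      n y 0 * fderiv ℝ n y p 0 + n y 1 * fderiv ℝ n y p 1 + n y 2 * fderiv ℝ n y p 2 = 0 := by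
    intro y hy p
    have hone : (fun z => n z 0 * n z 0 + n z 1 * n z 1 + n z 2 * n z 2)
        =ᶠ[nhds y] fun _ => (1 : ℝ) :=
      Filter.eventuallyEq_of_mem (hΩ.mem_nhds hy) fun z hz => by
        simpa [dotProduct, Fin.sum_univ_three] using hunit z hz
    have h0 : fderiv ℝ (fun z => n z 0 * n z 0 + n z 1 * n z 1 + n z 2 * n z 2) y p = 0 := by
      rw [hone.fderiv_eq]; simp
    rw [fd_add2 (((hdc y hy 0).fun_mul (hdc y hy 0)).fun_add ((hdc y hy 1).fun_mul (hdc y hy 1)))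
        ((hdc y hy 2).fun_mul (hdc y hy 2)),
      fd_add2 ((hdc y hy 0).fun_mul (hdc y hy 0)) ((hdc y hy 1).fun_mul (hdc y hy 1)),
      fd_mul (hdc y hy 0) (hdc y hy 0), fd_mul (hdc y hy 1) (hdc y hy 1),
      fd_mul (hdc y hy 2) (hdc y hy 2), (comp_pi (hdiff y hy) 0).2 p,
      (comp_pi (hdiff y hy) 1).2 p, (comp_pi (hdiff y hy) 2).2 p] at h0
    linear_combination h0 / 2
  have hN : n x 0 * n x 0 + n x 1 * n x 1 + n x 2 * n x 2 = 1 := by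
    simpa [dotProduct, Fin.sum_univ_three] using hunit x hx
  have hU : n x 0 * pd1 n x 0 + n x 1 * pd1 n x 1 + n x 2 * pd1 n x 2 = 0 := hNdot x hx (1, 0)
  have hV : n x 0 * pd2 n x 0 + n x 1 * pd2 n x 1 + n x 2 * pd2 n x 2 = 0 := hNdot x hx (0, 1)
  have hS : σ * σ = 1 := by rcases hσ with h | h <;> rw [h] <;> norm_num
  have hc2 : Real.sqrt (3 / 2) * Real.sqrt (3 / 2) = 3 / 2 :=
    Real.mul_self_sqrt (by norm_num)
  -- second derivative of the constraint
  have hW : pd1 n x 0 * pd1 n x 0 + pd1 n x 1 * pd1 n x 1 + pd1 n x 2 * pd1 n x 2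
      + (n x 0 * pd1 (pd1 n) x 0 + n x 1 * pd1 (pd1 n) x 1 + n x 2 * pd1 (pd1 n) x 2) = 0 := by
    have hzero : ∀ z ∈ Ω, n z 0 * pd1 n z 0 + n z 1 * pd1 n z 1 + n z 2 * pd1 n z 2 = 0 :=
      fun z hz => hNdot z hz (1, 0)
    have hev0 : (fun z => n z 0 * pd1 n z 0 + n z 1 * pd1 n z 1 + n z 2 * pd1 n z 2)
        =ᶠ[nhds x] fun _ => (0 : ℝ) := Filter.eventuallyEq_of_mem hmem hzero
    have h0 : fderiv ℝ (fun z => n z 0 * pd1 n z 0 + n z 1 * pd1 n z 1 + n z 2 * pd1 n z 2)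
        x (1, 0) = 0 := by rw [hev0.fderiv_eq]; simp
    rw [fd_add2 (((hdcx 0).fun_mul (hd1c 0)).fun_add ((hdcx 1).fun_mul (hd1c 1))) ((hdcx 2).fun_mul (hd1c 2)),
      fd_add2 ((hdcx 0).fun_mul (hd1c 0)) ((hdcx 1).fun_mul (hd1c 1)),
      fd_mul (hdcx 0) (hd1c 0), fd_mul (hdcx 1) (hd1c 1), fd_mul (hdcx 2) (hd1c 2),
      hv1 0, hv1 1, hv1 2, hw11 0, hw11 1, hw11 2] at h0
    linear_combination h0
  -- conformality at x, componentwise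
  have hcveq := hconf x hx
  have hcv0 : pd2 n x 0 = σ * (n x 1 * pd1 n x 2 - n x 2 * pd1 n x 1) := by
    rw [hcveq]; simp [cross_apply]
  have hcv1 : pd2 n x 1 = σ * (n x 2 * pd1 n x 0 - n x 0 * pd1 n x 2) := by
    rw [hcveq]; simp [cross_apply]
  have hcv2 : pd2 n x 2 = σ * (n x 0 * pd1 n x 1 - n x 1 * pd1 n x 0) := by
    rw [hcveq]; simp [cross_apply]
  -- derivative of the conformality relation
  have hcross : ∀ p : ℝ × ℝ,
      (fderiv ℝ (pd2 n) x p 0 = σ * ((fderiv ℝ n x p 1 * pd1 n x 2 - fderiv ℝ n x p 2 * pd1 n x 1)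
        + (n x 1 * fderiv ℝ (pd1 n) x p 2 - n x 2 * fderiv ℝ (pd1 n) x p 1)))
      ∧ (fderiv ℝ (pd2 n) x p 1 = σ * ((fderiv ℝ n x p 2 * pd1 n x 0 - fderiv ℝ n x p 0 * pd1 n x 2)
        + (n x 2 * fderiv ℝ (pd1 n) x p 0 - n x 0 * fderiv ℝ (pd1 n) x p 2)))
      ∧ (fderiv ℝ (pd2 n) x p 2 = σ * ((fderiv ℝ n x p 0 * pd1 n x 1 - fderiv ℝ n x p 1 * pd1 n x 0)
        + (n x 0 * fderiv ℝ (pd1 n) x p 1 - n x 1 * fderiv ℝ (pd1 n) x p 0))) := by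
    intro p
    refine ⟨?_, ?_, ?_⟩
    · rw [← (comp_pi hpd2 0).2 p]
      have hev : (fun y => pd2 n y 0) =ᶠ[nhds x]
          fun y => σ * (n y 1 * pd1 n y 2 - n y 2 * pd1 n y 1) :=
        Filter.eventuallyEq_of_mem hmem fun y hy => by
          rw [hconf y hy]; simp [cross_apply]
      rw [hev.fderiv_eq, fderiv_const_mul (((hdcx 1).fun_mul (hd1c 2)).fun_sub ((hdcx 2).fun_mul (hd1c 1)))]
      simp only [ContinuousLinearMap.smul_apply, smul_eq_mul]
      rw [fd_sub2 ((hdcx 1).fun_mul (hd1c 2)) ((hdcx 2).fun_mul (hd1c 1)),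
        fd_mul (hdcx 1) (hd1c 2), fd_mul (hdcx 2) (hd1c 1),
        (comp_pi (hdiff x hx) 1).2 p, (comp_pi (hdiff x hx) 2).2 p,
        (comp_pi hpd1 2).2 p, (comp_pi hpd1 1).2 p]
      ring
    · rw [← (comp_pi hpd2 1).2 p]
      have hev : (fun y => pd2 n y 1) =ᶠ[nhds x]
          fun y => σ * (n y 2 * pd1 n y 0 - n y 0 * pd1 n y 2) :=
        Filter.eventuallyEq_of_mem hmem fun y hy => by
          rw [hconf y hy]; simp [cross_apply]
      rw [hev.fderiv_eq, fderiv_const_mul (((hdcx 2).fun_mul (hd1c 0)).fun_sub ((hdcx 0).fun_mul (hd1c 2)))]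
      simp only [ContinuousLinearMap.smul_apply, smul_eq_mul]
      rw [fd_sub2 ((hdcx 2).fun_mul (hd1c 0)) ((hdcx 0).fun_mul (hd1c 2)),
        fd_mul (hdcx 2) (hd1c 0), fd_mul (hdcx 0) (hd1c 2),
        (comp_pi (hdiff x hx) 2).2 p, (comp_pi (hdiff x hx) 0).2 p,
        (comp_pi hpd1 0).2 p, (comp_pi hpd1 2).2 p]
      ring
    · rw [← (comp_pi hpd2 2).2 p]
      have hev : (fun y => pd2 n y 2) =ᶠ[nhds x]
          fun y => σ * (n y 0 * pd1 n y 1 - n y 1 * pd1 n y 0) :=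
        Filter.eventuallyEq_of_mem hmem fun y hy => by
          rw [hconf y hy]; simp [cross_apply]
      rw [hev.fderiv_eq, fderiv_const_mul (((hdcx 0).fun_mul (hd1c 1)).fun_sub ((hdcx 1).fun_mul (hd1c 0)))]
      simp only [ContinuousLinearMap.smul_apply, smul_eq_mul]
      rw [fd_sub2 ((hdcx 0).fun_mul (hd1c 1)) ((hdcx 1).fun_mul (hd1c 0)),
        fd_mul (hdcx 0) (hd1c 1), fd_mul (hdcx 1) (hd1c 0),
        (comp_pi (hdiff x hx) 0).2 p, (comp_pi (hdiff x hx) 1).2 p,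
        (comp_pi hpd1 1).2 p, (comp_pi hpd1 0).2 p]
      ring
  -- mixed second derivatives
  have hm0 : pd1 (pd2 n) x 0 = σ * ((pd1 n x 1 * pd1 n x 2 - pd1 n x 2 * pd1 n x 1)
      + (n x 1 * pd1 (pd1 n) x 2 - n x 2 * pd1 (pd1 n) x 1)) := (hcross (1, 0)).1
  have hm1 : pd1 (pd2 n) x 1 = σ * ((pd1 n x 2 * pd1 n x 0 - pd1 n x 0 * pd1 n x 2)
      + (n x 2 * pd1 (pd1 n) x 0 - n x 0 * pd1 (pd1 n) x 2)) := (hcross (1, 0)).2.1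
  have hm2 : pd1 (pd2 n) x 2 = σ * ((pd1 n x 0 * pd1 n x 1 - pd1 n x 1 * pd1 n x 0)
      + (n x 0 * pd1 (pd1 n) x 1 - n x 1 * pd1 (pd1 n) x 0)) := (hcross (1, 0)).2.2
  have hw2_0 : pd2 (pd2 n) x 0 = σ * ((pd2 n x 1 * pd1 n x 2 - pd2 n x 2 * pd1 n x 1)
      + (n x 1 * pd1 (pd2 n) x 2 - n x 2 * pd1 (pd2 n) x 1)) := by
    have h : pd2 (pd2 n) x 0 = σ * ((pd2 n x 1 * pd1 n x 2 - pd2 n x 2 * pd1 n x 1)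
        + (n x 1 * pd2 (pd1 n) x 2 - n x 2 * pd2 (pd1 n) x 1)) := (hcross (0, 1)).1
    rw [h, hswap]
  have hw2_1 : pd2 (pd2 n) x 1 = σ * ((pd2 n x 2 * pd1 n x 0 - pd2 n x 0 * pd1 n x 2)
      + (n x 2 * pd1 (pd2 n) x 0 - n x 0 * pd1 (pd2 n) x 2)) := by
    have h : pd2 (pd2 n) x 1 = σ * ((pd2 n x 2 * pd1 n x 0 - pd2 n x 0 * pd1 n x 2)
        + (n x 2 * pd2 (pd1 n) x 0 - n x 0 * pd2 (pd1 n) x 2)) := (hcross (0, 1)).2.1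
    rw [h, hswap]
  have hw2_2 : pd2 (pd2 n) x 2 = σ * ((pd2 n x 0 * pd1 n x 1 - pd2 n x 1 * pd1 n x 0)
      + (n x 0 * pd1 (pd2 n) x 1 - n x 1 * pd1 (pd2 n) x 0)) := by
    have h : pd2 (pd2 n) x 2 = σ * ((pd2 n x 0 * pd1 n x 1 - pd2 n x 1 * pd1 n x 0)
        + (n x 0 * pd2 (pd1 n) x 1 - n x 1 * pd2 (pd1 n) x 0)) := (hcross (0, 1)).2.2
    rw [h, hswap]
  -- the Laplacian of n is parallel to n
  obtain ⟨hD0, hD1, hD2⟩ := delta_scalar σ (n x 0) (n x 1) (n x 2)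
    (pd1 n x 0) (pd1 n x 1) (pd1 n x 2)
    (pd1 (pd1 n) x 0) (pd1 (pd1 n) x 1) (pd1 (pd1 n) x 2)
    (pd2 n x 0) (pd2 n x 1) (pd2 n x 2)
    (pd1 (pd2 n) x 0) (pd1 (pd2 n) x 1) (pd1 (pd2 n) x 2)
    (pd2 (pd2 n) x 0) (pd2 (pd2 n) x 1) (pd2 (pd2 n) x 2)
    hS hN hU hW hcv0 hcv1 hcv2 hm0 hm1 hm2 hw2_0 hw2_1 hw2_2
  have hD : ∀ k : Fin 3, pd1 (pd1 n) x k + pd2 (pd2 n) x k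
      = -(2 * (pd1 n x 0 * pd1 n x 0 + pd1 n x 1 * pd1 n x 1 + pd1 n x 2 * pd1 n x 2))
        * n x k := by
    intro k
    fin_cases k
    · exact hD0
    · exact hD1
    · exact hD2
  -- outer product identity
  obtain ⟨h00, h01, h02, h10, h11, h12, h20, h21, h22⟩ := outer_scalar σ (n x 0) (n x 1) (n x 2)
    (pd1 n x 0) (pd1 n x 1) (pd1 n x 2) (pd2 n x 0) (pd2 n x 1) (pd2 n x 2)
    hS hN hU hcv0 hcv1 hcv2
  have huv : ∀ i j : Fin 3, pd1 n x i * pd1 n x j + pd2 n x i * pd2 n x j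
      = (pd1 n x 0 * pd1 n x 0 + pd1 n x 1 * pd1 n x 1 + pd1 n x 2 * pd1 n x 2)
        * ((if i = j then (1 : ℝ) else 0) - n x i * n x j) := by
    intro i j
    fin_cases i <;> fin_cases j
    · rw [if_pos rfl]; exact h00
    · rw [if_neg (by decide)]; exact h01
    · rw [if_neg (by decide)]; exact h02
    · rw [if_neg (by decide)]; exact h10
    · rw [if_pos rfl]; exact h11
    · rw [if_neg (by decide)]; exact h12
    · rw [if_neg (by decide)]; exact h20
    · rw [if_neg (by decide)]; exact h21
    · rw [if_pos rfl]; exact h22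
  -- |∂₂ n|² = |∂₁ n|²
  have hvv : pd2 n x 0 * pd2 n x 0 + pd2 n x 1 * pd2 n x 1 + pd2 n x 2 * pd2 n x 2
      = pd1 n x 0 * pd1 n x 0 + pd1 n x 1 * pd1 n x 1 + pd1 n x 2 * pd1 n x 2 := by
    rw [hcv0, hcv1, hcv2]
    linear_combination ((n x 1 * pd1 n x 2 - n x 2 * pd1 n x 1) ^ 2
        + (n x 2 * pd1 n x 0 - n x 0 * pd1 n x 2) ^ 2
        + (n x 0 * pd1 n x 1 - n x 1 * pd1 n x 0) ^ 2) * hS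
      + (pd1 n x 0 * pd1 n x 0 + pd1 n x 1 * pd1 n x 1 + pd1 n x 2 * pd1 n x 2) * hN
      - (n x 0 * pd1 n x 0 + n x 1 * pd1 n x 1 + n x 2 * pd1 n x 2) * hU
  -- Frobenius norms of the first derivatives
  have hA1 := hP1 x hx
  have hA2 := hP2 x hx
  have hF1 : frobSq (pdM1 (Qtensor n) x)
      = 3 * (pd1 n x 0 * pd1 n x 0 + pd1 n x 1 * pd1 n x 1 + pd1 n x 2 * pd1 n x 2) := by
    simp only [frobSq, Matrix.trace, Matrix.diag, Matrix.mul_apply, Matrix.transpose_apply,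
      Fin.sum_univ_three, hA1]
    linear_combination ((pd1 n x 0 * n x 0 + n x 0 * pd1 n x 0) ^ 2
        + (pd1 n x 0 * n x 1 + n x 0 * pd1 n x 1) ^ 2
        + (pd1 n x 0 * n x 2 + n x 0 * pd1 n x 2) ^ 2
        + (pd1 n x 1 * n x 0 + n x 1 * pd1 n x 0) ^ 2
        + (pd1 n x 1 * n x 1 + n x 1 * pd1 n x 1) ^ 2
        + (pd1 n x 1 * n x 2 + n x 1 * pd1 n x 2) ^ 2
        + (pd1 n x 2 * n x 0 + n x 2 * pd1 n x 0) ^ 2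
        + (pd1 n x 2 * n x 1 + n x 2 * pd1 n x 1) ^ 2
        + (pd1 n x 2 * n x 2 + n x 2 * pd1 n x 2) ^ 2) * hc2
      + (3 * (pd1 n x 0 * pd1 n x 0 + pd1 n x 1 * pd1 n x 1 + pd1 n x 2 * pd1 n x 2)) * hN
      + (3 * (n x 0 * pd1 n x 0 + n x 1 * pd1 n x 1 + n x 2 * pd1 n x 2)) * hU
  have hF2 : frobSq (pdM2 (Qtensor n) x)
      = 3 * (pd2 n x 0 * pd2 n x 0 + pd2 n x 1 * pd2 n x 1 + pd2 n x 2 * pd2 n x 2) := by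
    simp only [frobSq, Matrix.trace, Matrix.diag, Matrix.mul_apply, Matrix.transpose_apply,
      Fin.sum_univ_three, hA2]
    linear_combination ((pd2 n x 0 * n x 0 + n x 0 * pd2 n x 0) ^ 2
        + (pd2 n x 0 * n x 1 + n x 0 * pd2 n x 1) ^ 2
        + (pd2 n x 0 * n x 2 + n x 0 * pd2 n x 2) ^ 2
        + (pd2 n x 1 * n x 0 + n x 1 * pd2 n x 0) ^ 2
        + (pd2 n x 1 * n x 1 + n x 1 * pd2 n x 1) ^ 2
        + (pd2 n x 1 * n x 2 + n x 1 * pd2 n x 2) ^ 2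
        + (pd2 n x 2 * n x 0 + n x 2 * pd2 n x 0) ^ 2
        + (pd2 n x 2 * n x 1 + n x 2 * pd2 n x 1) ^ 2
        + (pd2 n x 2 * n x 2 + n x 2 * pd2 n x 2) ^ 2) * hc2
      + (3 * (pd2 n x 0 * pd2 n x 0 + pd2 n x 1 * pd2 n x 1 + pd2 n x 2 * pd2 n x 2)) * hN
      + (3 * (n x 0 * pd2 n x 0 + n x 1 * pd2 n x 1 + n x 2 * pd2 n x 2)) * hV
  -- final assembly
  ext i j
  rw [Matrix.add_apply, hPP1 i j, hPP2 i j, Matrix.smul_apply, smul_eq_mul, hQe x i j,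
    hF1, hF2]
  linear_combination (Real.sqrt (3 / 2) * n x j) * hD i + (Real.sqrt (3 / 2) * n x i) * hD j
    + (2 * Real.sqrt (3 / 2)) * huv i j
    + (3 * Real.sqrt (3 / 2) * (n x i * n x j - 3⁻¹ * (if i = j then (1 : ℝ) else 0))) * hvv
end

section
/- Let Ω ⊆ ℝ² be an open set and let n : Ω → ℝ³ be twice continuously differentiable with |n(x)| = 1 for all x ∈ Ω, and define Q : Ω → S₀ by Q(x) = √(3/2)(n(x)⊗n(x) − (1/3)I). If Q satisfies ΔQ(x) = −(|∂₁Q(x)|² + |∂₂Q(x)|²) Q(x) for all x ∈ Ω (Frobenius norms), then: (a) n satisfies the harmonic map equation Δn(x) = −(|∂₁n(x)|² + |∂₂n(x)|²) n(x) on Ω, and (b) at every point x ∈ Ω one has |∂₁n(x)| = |∂₂n(x)| and ∂₁n(x)·∂₂n(x) = 0. -/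
open Matrix

set_option maxHeartbeats 1000000 in
/-- If the `Q`-tensor field `Q = √(3/2)(n ⊗ n - (1/3)I)` associated with a unit-vector
field `n` satisfies the `S⁴`-valued harmonic map equation `ΔQ = -(|∂₁Q|² + |∂₂Q|²) Q`,
then (a) `n` satisfies the harmonic map equation `Δn = -|∇n|² n`, and (b) at every
point `|∂₁n| = |∂₂n|` and `∂₁n · ∂₂n = 0`. -/
theorem Qtensor_harmonic_implies_conformal
    (Ω : Set (ℝ × ℝ)) (hΩ : IsOpen Ω)
    (n : ℝ × ℝ → (Fin 3 → ℝ)) (hC2 : ContDiffOn ℝ 2 n Ω)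
    (hunit : ∀ x ∈ Ω, n x ⬝ᵥ n x = 1)
    (hharm : ∀ x ∈ Ω,
      pdM1 (pdM1 (Qtensor n)) x + pdM2 (pdM2 (Qtensor n)) x
        = -(frobSq (pdM1 (Qtensor n) x) + frobSq (pdM2 (Qtensor n) x)) • Qtensor n x) :
    ∀ x ∈ Ω,
      (pd1 (pd1 n) x + pd2 (pd2 n) x
          = -(pd1 n x ⬝ᵥ pd1 n x + pd2 n x ⬝ᵥ pd2 n x) • n x)
      ∧ pd1 n x ⬝ᵥ pd1 n x = pd2 n x ⬝ᵥ pd2 n x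
      ∧ pd1 n x ⬝ᵥ pd2 n x = 0 := by
  intro x hx
  have hΩx : Ω ∈ nhds x := hΩ.mem_nhds hx
  have hc2at : ∀ y ∈ Ω, ContDiffAt ℝ 2 n y := fun y hy => hC2.contDiffAt (hΩ.mem_nhds hy)
  have hdiff : ∀ y ∈ Ω, DifferentiableAt ℝ n y := fun y hy =>
    (hc2at y hy).differentiableAt (by norm_num)
  have hfd : DifferentiableAt ℝ (fderiv ℝ n) x :=
    ((hc2at x hx).fderiv_right (m := 1) (by norm_num)).differentiableAt (by norm_num)
  have hcne : Real.sqrt (3 / 2) ≠ 0 := ne_of_gt (Real.sqrt_pos.mpr (by norm_num))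
  -- derivative of components of n
  have hproj : ∀ y ∈ Ω, ∀ i : Fin 3, HasFDerivAt (fun z => n z i)
      ((ContinuousLinearMap.proj i : (Fin 3 → ℝ) →L[ℝ] ℝ).comp (fderiv ℝ n y)) y :=
    fun y hy i =>
      ((ContinuousLinearMap.proj i : (Fin 3 → ℝ) →L[ℝ] ℝ).hasFDerivAt).comp y
        (hdiff y hy).hasFDerivAt
  -- derivative of directional derivative of n, at x
  have hApp : ∀ w : ℝ × ℝ, HasFDerivAt (fun y => fderiv ℝ n y w)
      ((ContinuousLinearMap.apply ℝ (Fin 3 → ℝ) w).comp (fderiv ℝ (fderiv ℝ n) x)) x :=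
    fun w => ((ContinuousLinearMap.apply ℝ (Fin 3 → ℝ) w).hasFDerivAt).comp x hfd.hasFDerivAt
  have hAppC : ∀ (w : ℝ × ℝ) (i : Fin 3), HasFDerivAt (fun y => fderiv ℝ n y w i)
      ((ContinuousLinearMap.proj i : (Fin 3 → ℝ) →L[ℝ] ℝ).comp
        ((ContinuousLinearMap.apply ℝ (Fin 3 → ℝ) w).comp (fderiv ℝ (fderiv ℝ n) x))) x :=
    fun w i =>
      ((ContinuousLinearMap.proj i : (Fin 3 → ℝ) →L[ℝ] ℝ).hasFDerivAt).comp x (hApp w)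
  -- first derivative of entries of Q
  have hQd : ∀ y ∈ Ω, ∀ (i j : Fin 3) (w : ℝ × ℝ),
      fderiv ℝ (fun z => Qtensor n z i j) y w
        = Real.sqrt (3 / 2) * (fderiv ℝ n y w i * n y j + n y i * fderiv ℝ n y w j) := by
    intro y hy i j w
    have hni := hproj y hy i
    have hnj := hproj y hy j
    have hall := ((hni.fun_mul hnj).sub_const
        ((3:ℝ)⁻¹ * (if i = j then (1:ℝ) else 0))).const_mul (Real.sqrt (3 / 2))
    have heq : (fun z => Qtensor n z i j)
        = fun z => Real.sqrt (3 / 2) *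
            (n z i * n z j - (3:ℝ)⁻¹ * (if i = j then (1:ℝ) else 0)) := by
      funext z
      simp [Qtensor, Matrix.sub_apply, Matrix.smul_apply, Matrix.one_apply, smul_eq_mul,
        Matrix.vecMulVec_apply]
    rw [heq, hall.fderiv]
    simp [ContinuousLinearMap.smul_apply, ContinuousLinearMap.add_apply,
      ContinuousLinearMap.coe_comp', Function.comp_apply, ContinuousLinearMap.proj_apply,
      smul_eq_mul]
    ring
  -- orthogonality n ⬝ ∂n = 0 on Ω
  have horth : ∀ y ∈ Ω, ∀ w : ℝ × ℝ,
      (∑ i : Fin 3, n y i * fderiv ℝ n y w i) = 0 := by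
    intro y hy w
    have hsum : HasFDerivAt (fun z => ∑ i : Fin 3, n z i * n z i)
        (∑ i : Fin 3,
          (n y i • ((ContinuousLinearMap.proj i : (Fin 3 → ℝ) →L[ℝ] ℝ).comp (fderiv ℝ n y))
           + n y i • ((ContinuousLinearMap.proj i : (Fin 3 → ℝ) →L[ℝ] ℝ).comp (fderiv ℝ n y)))) y :=
      HasFDerivAt.fun_sum fun i _ => (hproj y hy i).fun_mul (hproj y hy i)
    have hconst : (fun z => ∑ i : Fin 3, n z i * n z i) =ᶠ[nhds y] fun _ => (1:ℝ) := by
      refine Filter.eventuallyEq_of_mem (hΩ.mem_nhds hy) (fun z hz => ?_)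
      simpa [dotProduct] using hunit z hz
    have hF0 := hsum.fderiv.symm.trans (hconst.fderiv_eq.trans (fderiv_const_apply 1))
    have h0w := DFunLike.congr_fun hF0 w
    simp only [ContinuousLinearMap.sum_apply, ContinuousLinearMap.add_apply,
      ContinuousLinearMap.smul_apply, ContinuousLinearMap.coe_comp', Function.comp_apply,
      ContinuousLinearMap.proj_apply, smul_eq_mul, ContinuousLinearMap.zero_apply,
      Fin.sum_univ_three] at h0w
    simp only [Fin.sum_univ_three]
    linear_combination h0w / 2
  -- second derivative of the constraint, at x
  have hsecond : ∀ w : ℝ × ℝ,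
      (∑ i : Fin 3, fderiv ℝ n x w i * fderiv ℝ n x w i)
        + (∑ i : Fin 3, n x i * fderiv ℝ (fderiv ℝ n) x w w i) = 0 := by
    intro w
    have hsum : HasFDerivAt (fun y => ∑ i : Fin 3, n y i * fderiv ℝ n y w i)
        (∑ i : Fin 3,
          (n x i • ((ContinuousLinearMap.proj i : (Fin 3 → ℝ) →L[ℝ] ℝ).comp
              ((ContinuousLinearMap.apply ℝ (Fin 3 → ℝ) w).comp (fderiv ℝ (fderiv ℝ n) x)))
           + fderiv ℝ n x w i •
              ((ContinuousLinearMap.proj i : (Fin 3 → ℝ) →L[ℝ] ℝ).comp (fderiv ℝ n x)))) x :=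
      HasFDerivAt.fun_sum fun i _ => (hproj x hx i).fun_mul (hAppC w i)
    have hconst : (fun y => ∑ i : Fin 3, n y i * fderiv ℝ n y w i) =ᶠ[nhds x] fun _ => (0:ℝ) :=
      Filter.eventuallyEq_of_mem hΩx fun y hy => horth y hy w
    have hF0 := hsum.fderiv.symm.trans (hconst.fderiv_eq.trans (fderiv_const_apply 0))
    have h0w := DFunLike.congr_fun hF0 w
    simp only [ContinuousLinearMap.sum_apply, ContinuousLinearMap.add_apply,
      ContinuousLinearMap.smul_apply, ContinuousLinearMap.coe_comp', Function.comp_apply,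
      ContinuousLinearMap.proj_apply, ContinuousLinearMap.apply_apply, smul_eq_mul,
      ContinuousLinearMap.zero_apply, Fin.sum_univ_three] at h0w
    simp only [Fin.sum_univ_three]
    linear_combination h0w
  -- second derivatives of entries of Q, at x
  have hQdd : ∀ (w : ℝ × ℝ) (i j : Fin 3),
      fderiv ℝ (fun y => fderiv ℝ (fun z => Qtensor n z i j) y w) x w
        = Real.sqrt (3 / 2) * (fderiv ℝ (fderiv ℝ n) x w w i * n x j
            + 2 * (fderiv ℝ n x w i * fderiv ℝ n x w j)
            + n x i * fderiv ℝ (fderiv ℝ n) x w w j) := by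
    intro w i j
    have heq : (fun y => fderiv ℝ (fun z => Qtensor n z i j) y w)
        =ᶠ[nhds x] fun y => Real.sqrt (3 / 2) *
            (fderiv ℝ n y w i * n y j + n y i * fderiv ℝ n y w j) :=
      Filter.eventuallyEq_of_mem hΩx fun y hy => hQd y hy i j w
    rw [heq.fderiv_eq]
    have hni := hproj x hx i
    have hnj := hproj x hx j
    have hall := (((hAppC w i).fun_mul hnj).fun_add (hni.fun_mul (hAppC w j))).const_mul (Real.sqrt (3 / 2))
    rw [hall.fderiv]
    simp [ContinuousLinearMap.smul_apply, ContinuousLinearMap.add_apply,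
      ContinuousLinearMap.coe_comp', Function.comp_apply, ContinuousLinearMap.proj_apply,
      ContinuousLinearMap.apply_apply, smul_eq_mul]
    ring
  -- conversion of pd1/pd2 to raw fderiv form
  have hp11 : pd1 (pd1 n) x = fderiv ℝ (fderiv ℝ n) x (1, 0) (1, 0) := by
    show fderiv ℝ (fun y => fderiv ℝ n y (1, 0)) x (1, 0) = _
    rw [(hApp (1, 0)).fderiv]
    rfl
  have hq22 : pd2 (pd2 n) x = fderiv ℝ (fderiv ℝ n) x (0, 1) (0, 1) := by
    show fderiv ℝ (fun y => fderiv ℝ n y (0, 1)) x (0, 1) = _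
    rw [(hApp (0, 1)).fderiv]
    rfl
  -- the harmonic map equation, entrywise, with the factor √(3/2) cancelled
  have hh := hharm x hx
  set μ : ℝ := -(frobSq (pdM1 (Qtensor n) x) + frobSq (pdM2 (Qtensor n) x)) with hμdef
  have hS : ∀ i j : Fin 3,
      fderiv ℝ (fderiv ℝ n) x (1, 0) (1, 0) i * n x j
        + 2 * (fderiv ℝ n x (1, 0) i * fderiv ℝ n x (1, 0) j)
        + n x i * fderiv ℝ (fderiv ℝ n) x (1, 0) (1, 0) j
      + (fderiv ℝ (fderiv ℝ n) x (0, 1) (0, 1) i * n x j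
        + 2 * (fderiv ℝ n x (0, 1) i * fderiv ℝ n x (0, 1) j)
        + n x i * fderiv ℝ (fderiv ℝ n) x (0, 1) (0, 1) j)
      = μ * (n x i * n x j - (3:ℝ)⁻¹ * (if i = j then (1:ℝ) else 0)) := by
    intro i j
    have h : (pdM1 (pdM1 (Qtensor n)) x + pdM2 (pdM2 (Qtensor n)) x) i j
        = (μ • Qtensor n x) i j := by rw [hh]
    simp only [Matrix.add_apply, pdM1, pdM2, Matrix.of_apply] at h
    rw [hQdd (1, 0) i j, hQdd (0, 1) i j] at h
    have hR : (μ • Qtensor n x) i j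
        = μ * (Real.sqrt (3 / 2) * (n x i * n x j - (3:ℝ)⁻¹ * (if i = j then (1:ℝ) else 0))) := by
      simp [Qtensor, Matrix.smul_apply, Matrix.sub_apply, Matrix.one_apply,
        Matrix.vecMulVec_apply, smul_eq_mul]
    rw [hR] at h
    refine mul_left_cancel₀ hcne ?_
    linear_combination h
  clear hh hharm
  -- scalar shorthands
  set u : Fin 3 → ℝ := fderiv ℝ n x (1, 0) with hu
  set v : Fin 3 → ℝ := fderiv ℝ n x (0, 1) with hv
  set p : Fin 3 → ℝ := fderiv ℝ (fderiv ℝ n) x (1, 0) (1, 0) with hp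
  set q : Fin 3 → ℝ := fderiv ℝ (fderiv ℝ n) x (0, 1) (0, 1) with hq
  clear_value u v p q μ
  have hpd1 : pd1 n x = u := by rw [hu]; rfl
  have hpd2 : pd2 n x = v := by rw [hv]; rfl
  -- scalar constraint identities
  have hnn : n x 0 * n x 0 + n x 1 * n x 1 + n x 2 * n x 2 = 1 := by
    simpa [dotProduct, Fin.sum_univ_three] using hunit x hx
  have hun : n x 0 * u 0 + n x 1 * u 1 + n x 2 * u 2 = 0 := by
    simpa [Fin.sum_univ_three, ← hu] using horth x hx (1, 0)
  have hvn : n x 0 * v 0 + n x 1 * v 1 + n x 2 * v 2 = 0 := by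
    simpa [Fin.sum_univ_three, ← hv] using horth x hx (0, 1)
  have hsec1 : (u 0 * u 0 + u 1 * u 1 + u 2 * u 2)
      + (n x 0 * p 0 + n x 1 * p 1 + n x 2 * p 2) = 0 := by
    simpa [Fin.sum_univ_three, ← hu, ← hp] using hsecond (1, 0)
  have hsec2 : (v 0 * v 0 + v 1 * v 1 + v 2 * v 2)
      + (n x 0 * q 0 + n x 1 * q 1 + n x 2 * q 2) = 0 := by
    simpa [Fin.sum_univ_three, ← hv, ← hq] using hsecond (0, 1)
  -- instantiate entries
  have e00 := hS 0 0; rw [if_pos rfl] at e00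
  have e11 := hS 1 1; rw [if_pos rfl] at e11
  have e22 := hS 2 2; rw [if_pos rfl] at e22
  have e01 := hS 0 1; rw [if_neg (by decide)] at e01
  have e02 := hS 0 2; rw [if_neg (by decide)] at e02
  have e10 := hS 1 0; rw [if_neg (by decide)] at e10
  have e12 := hS 1 2; rw [if_neg (by decide)] at e12
  have e20 := hS 2 0; rw [if_neg (by decide)] at e20
  have e21 := hS 2 1; rw [if_neg (by decide)] at e21
  clear hS
  -- abbreviations as scalars
  have hs : n x 0 * (p 0 + q 0) + n x 1 * (p 1 + q 1) + n x 2 * (p 2 + q 2)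
      = -((u 0 * u 0 + u 1 * u 1 + u 2 * u 2) + (v 0 * v 0 + v 1 * v 1 + v 2 * v 2)) := by
    linear_combination hsec1 + hsec2
  have K0 : p 0 + q 0 = ((u 0 * u 0 + u 1 * u 1 + u 2 * u 2)
        + (v 0 * v 0 + v 1 * v 1 + v 2 * v 2)) * n x 0 + (2/3) * μ * n x 0 := by
    linear_combination (n x 0) * e00 + (n x 1) * e01 + (n x 2) * e02
      - (p 0 + q 0 - μ * n x 0) * hnn - (n x 0) * hs - 2 * (u 0) * hun - 2 * (v 0) * hvn
  have K1 : p 1 + q 1 = ((u 0 * u 0 + u 1 * u 1 + u 2 * u 2)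
        + (v 0 * v 0 + v 1 * v 1 + v 2 * v 2)) * n x 1 + (2/3) * μ * n x 1 := by
    linear_combination (n x 0) * e10 + (n x 1) * e11 + (n x 2) * e12
      - (p 1 + q 1 - μ * n x 1) * hnn - (n x 1) * hs - 2 * (u 1) * hun - 2 * (v 1) * hvn
  have K2 : p 2 + q 2 = ((u 0 * u 0 + u 1 * u 1 + u 2 * u 2)
        + (v 0 * v 0 + v 1 * v 1 + v 2 * v 2)) * n x 2 + (2/3) * μ * n x 2 := by
    linear_combination (n x 0) * e20 + (n x 1) * e21 + (n x 2) * e22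
      - (p 2 + q 2 - μ * n x 2) * hnn - (n x 2) * hs - 2 * (u 2) * hun - 2 * (v 2) * hvn
  have hmu : μ = -3 * ((u 0 * u 0 + u 1 * u 1 + u 2 * u 2)
      + (v 0 * v 0 + v 1 * v 1 + v 2 * v 2)) := by
    linear_combination (-3/2) * ((n x 0) * K0 + (n x 1) * K1 + (n x 2) * K2)
      + (-(3/2) * ((u 0 * u 0 + u 1 * u 1 + u 2 * u 2)
          + (v 0 * v 0 + v 1 * v 1 + v 2 * v 2)) - μ) * hnn + (3/2) * hs
  have ha0 : p 0 + q 0 = -((u 0 * u 0 + u 1 * u 1 + u 2 * u 2)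
      + (v 0 * v 0 + v 1 * v 1 + v 2 * v 2)) * n x 0 := by
    linear_combination K0 + (2/3) * (n x 0) * hmu
  have ha1 : p 1 + q 1 = -((u 0 * u 0 + u 1 * u 1 + u 2 * u 2)
      + (v 0 * v 0 + v 1 * v 1 + v 2 * v 2)) * n x 1 := by
    linear_combination K1 + (2/3) * (n x 1) * hmu
  have ha2 : p 2 + q 2 = -((u 0 * u 0 + u 1 * u 1 + u 2 * u 2)
      + (v 0 * v 0 + v 1 * v 1 + v 2 * v 2)) * n x 2 := by
    linear_combination K2 + (2/3) * (n x 2) * hmu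
  have h1 : 2 * (u 0 * u 0 + u 1 * u 1 + u 2 * u 2) ^ 2
        + 2 * (u 0 * v 0 + u 1 * v 1 + u 2 * v 2) ^ 2
      = ((u 0 * u 0 + u 1 * u 1 + u 2 * u 2) + (v 0 * v 0 + v 1 * v 1 + v 2 * v 2))
        * (u 0 * u 0 + u 1 * u 1 + u 2 * u 2) := by
    linear_combination (u 0 * u 0) * e00 + (u 0 * u 1) * e01 + (u 0 * u 2) * e02
      + (u 1 * u 0) * e10 + (u 1 * u 1) * e11 + (u 1 * u 2) * e12
      + (u 2 * u 0) * e20 + (u 2 * u 1) * e21 + (u 2 * u 2) * e22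
      - (2 * ((p 0 + q 0) * u 0 + (p 1 + q 1) * u 1 + (p 2 + q 2) * u 2)
          - μ * (n x 0 * u 0 + n x 1 * u 1 + n x 2 * u 2)) * hun
      - (1/3) * (u 0 * u 0 + u 1 * u 1 + u 2 * u 2) * hmu
  have h2 : 2 * (u 0 * v 0 + u 1 * v 1 + u 2 * v 2) ^ 2
        + 2 * (v 0 * v 0 + v 1 * v 1 + v 2 * v 2) ^ 2
      = ((u 0 * u 0 + u 1 * u 1 + u 2 * u 2) + (v 0 * v 0 + v 1 * v 1 + v 2 * v 2))
        * (v 0 * v 0 + v 1 * v 1 + v 2 * v 2) := by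
    linear_combination (v 0 * v 0) * e00 + (v 0 * v 1) * e01 + (v 0 * v 2) * e02
      + (v 1 * v 0) * e10 + (v 1 * v 1) * e11 + (v 1 * v 2) * e12
      + (v 2 * v 0) * e20 + (v 2 * v 1) * e21 + (v 2 * v 2) * e22
      - (2 * ((p 0 + q 0) * v 0 + (p 1 + q 1) * v 1 + (p 2 + q 2) * v 2)
          - μ * (n x 0 * v 0 + n x 1 * v 1 + n x 2 * v 2)) * hvn
      - (1/3) * (v 0 * v 0 + v 1 * v 1 + v 2 * v 2) * hmu
  have hc0 : ((u 0 * u 0 + u 1 * u 1 + u 2 * u 2) + (v 0 * v 0 + v 1 * v 1 + v 2 * v 2))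
      * (u 0 * v 0 + u 1 * v 1 + u 2 * v 2) = 0 := by
    linear_combination (u 0 * v 0) * e00 + (u 0 * v 1) * e01 + (u 0 * v 2) * e02
      + (u 1 * v 0) * e10 + (u 1 * v 1) * e11 + (u 1 * v 2) * e12
      + (u 2 * v 0) * e20 + (u 2 * v 1) * e21 + (u 2 * v 2) * e22
      - (((p 0 + q 0) * u 0 + (p 1 + q 1) * u 1 + (p 2 + q 2) * u 2)
          - μ * (n x 0 * u 0 + n x 1 * u 1 + n x 2 * u 2)) * hvn
      - (((p 0 + q 0) * v 0 + (p 1 + q 1) * v 1 + (p 2 + q 2) * v 2)) * hun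
      - (1/3) * (u 0 * v 0 + u 1 * v 1 + u 2 * v 2) * hmu
  -- finish the algebra
  have ha' : 0 ≤ u 0 * u 0 + u 1 * u 1 + u 2 * u 2 :=
    add_nonneg (add_nonneg (mul_self_nonneg _) (mul_self_nonneg _)) (mul_self_nonneg _)
  have hb' : 0 ≤ v 0 * v 0 + v 1 * v 1 + v 2 * v 2 :=
    add_nonneg (add_nonneg (mul_self_nonneg _) (mul_self_nonneg _)) (mul_self_nonneg _)
  have habs : ((u 0 * u 0 + u 1 * u 1 + u 2 * u 2) + (v 0 * v 0 + v 1 * v 1 + v 2 * v 2))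
      * ((u 0 * u 0 + u 1 * u 1 + u 2 * u 2) - (v 0 * v 0 + v 1 * v 1 + v 2 * v 2)) = 0 := by
    linear_combination h1 - h2
  have hab : u 0 * u 0 + u 1 * u 1 + u 2 * u 2 = v 0 * v 0 + v 1 * v 1 + v 2 * v 2 := by
    rcases mul_eq_zero.mp habs with h | h
    · have h3 : u 0 * u 0 + u 1 * u 1 + u 2 * u 2 = 0 := by linarith
      have h4 : v 0 * v 0 + v 1 * v 1 + v 2 * v 2 = 0 := by linarith
      rw [h3, h4]
    · linarith
  have hcz : u 0 * v 0 + u 1 * v 1 + u 2 * v 2 = 0 := by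
    rcases eq_or_ne ((u 0 * u 0 + u 1 * u 1 + u 2 * u 2)
        + (v 0 * v 0 + v 1 * v 1 + v 2 * v 2)) 0 with h | h
    · have h3 : u 0 * u 0 + u 1 * u 1 + u 2 * u 2 = 0 := by linarith
      have h5 : (u 0 * v 0 + u 1 * v 1 + u 2 * v 2) ^ 2 = 0 := by
        linear_combination (1/2 : ℝ) * h1
          - (((u 0 * u 0 + u 1 * u 1 + u 2 * u 2) - (v 0 * v 0 + v 1 * v 1 + v 2 * v 2))/2) * h3
      exact pow_eq_zero_iff (by norm_num : (2:ℕ) ≠ 0) |>.mp h5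
    · exact (mul_eq_zero.mp hc0).resolve_left h
  refine ⟨?_, ?_, ?_⟩
  · rw [hp11, hq22, hpd1, hpd2]
    funext i
    simp only [Pi.add_apply, Pi.smul_apply, smul_eq_mul, dotProduct, Fin.sum_univ_three]
    fin_cases i <;> simp only [Fin.zero_eta, Fin.mk_one, Fin.reduceFinMk, Fin.isValue]
    · linear_combination ha0
    · linear_combination ha1
    · linear_combination ha2
  · rw [hpd1, hpd2]
    simp only [dotProduct, Fin.sum_univ_three]
    linear_combination hab
  · rw [hpd1, hpd2]
    simp only [dotProduct, Fin.sum_univ_three]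
    linear_combination hcz
end

section
/- Let Ω ⊆ ℝ² be an open set and let n : Ω → ℝ³ be differentiable with |n(x)| = 1 and n(x)·e₃ > −1 for all x ∈ Ω. Define w : Ω → ℂ by w = (n₁ + i n₂)/(1 + n₃), where nⱼ = n·eⱼ. Then for each x ∈ Ω the identity ∂₂n(x) = n(x) × ∂₁n(x) holds if and only if w satisfies the Cauchy–Riemann equations at x, namely Re(∂₁w(x)) = Im(∂₂w(x)) and Re(∂₂w(x)) = −Im(∂₁w(x)). -/
open Matrix

/-- First partial derivative of a complex-valued map on `ℝ²`. -/
noncomputable def pdC1 (f : ℝ × ℝ → ℂ) (x : ℝ × ℝ) : ℂ := fderiv ℝ f x (1, 0)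

/-- Second partial derivative of a complex-valued map on `ℝ²`. -/
noncomputable def pdC2 (f : ℝ × ℝ → ℂ) (x : ℝ × ℝ) : ℂ := fderiv ℝ f x (0, 1)

/-- Stereographic projection (from the south pole `-e₃`) of a unit-vector field:
`w = (n₁ + i n₂) / (1 + n₃)`. -/
noncomputable def wproj (n : ℝ × ℝ → (Fin 3 → ℝ)) (x : ℝ × ℝ) : ℂ :=
  ((n x 0 : ℂ) + (n x 1 : ℂ) * Complex.I) / (1 + (n x 2 : ℂ))

/-- For a differentiable unit-vector field `n` avoiding the south pole, the
conformality relation `∂₂n = n × ∂₁n` holds at a point if and only if its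
stereographic projection `w` satisfies the Cauchy–Riemann equations there. -/
theorem conformal_iff_CauchyRiemann
    (Ω : Set (ℝ × ℝ)) (hΩ : IsOpen Ω)
    (n : ℝ × ℝ → (Fin 3 → ℝ)) (hdiff : DifferentiableOn ℝ n Ω)
    (hunit : ∀ x ∈ Ω, n x ⬝ᵥ n x = 1)
    (hpole : ∀ x ∈ Ω, -1 < n x 2) :
    ∀ x ∈ Ω,
      (pd2 n x = n x ⨯₃ pd1 n x
        ↔ (pdC1 (wproj n) x).re = (pdC2 (wproj n) x).im
          ∧ (pdC2 (wproj n) x).re = -(pdC1 (wproj n) x).im) := by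
  intro x hx
  have hmem : Ω ∈ nhds x := hΩ.mem_nhds hx
  have hdx : DifferentiableAt ℝ n x := (hdiff x hx).differentiableAt hmem
  have hF : HasFDerivAt n (fderiv ℝ n x) x := hdx.hasFDerivAt
  set F := fderiv ℝ n x with hFdef
  have hFi : ∀ i : Fin 3, HasFDerivAt (fun y => n y i)
      ((ContinuousLinearMap.proj i).comp F) x := fun i =>
    ((ContinuousLinearMap.proj i).hasFDerivAt.comp x hF : )
  set a : ℝ := n x 0 with ha
  set b : ℝ := n x 1 with hb
  set c : ℝ := n x 2 with hc
  set u0 : ℝ := F (1,0) 0 with hu0d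
  set u1 : ℝ := F (1,0) 1 with hu1d
  set u2 : ℝ := F (1,0) 2 with hu2d
  set v0 : ℝ := F (0,1) 0 with hv0d
  set v1 : ℝ := F (0,1) 1 with hv1d
  set v2 : ℝ := F (0,1) 2 with hv2d
  -- unit norm at x
  have hn : a * a + b * b + c * c = 1 := by
    have := hunit x hx
    simpa [dotProduct, Fin.sum_univ_three] using this
  -- derivative of the squared norm is zero
  have hsq : HasFDerivAt (fun y => n y ⬝ᵥ n y)
      (((a • ((ContinuousLinearMap.proj (0:Fin 3)).comp F)
        + a • ((ContinuousLinearMap.proj (0:Fin 3)).comp F))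
        + (b • ((ContinuousLinearMap.proj (1:Fin 3)).comp F)
        + b • ((ContinuousLinearMap.proj (1:Fin 3)).comp F)))
        + (c • ((ContinuousLinearMap.proj (2:Fin 3)).comp F)
        + c • ((ContinuousLinearMap.proj (2:Fin 3)).comp F))) x := by
    have he : (fun y => n y ⬝ᵥ n y)
        = fun y => (n y 0 * n y 0 + n y 1 * n y 1 + n y 2 * n y 2) := by
      funext y; simp [dotProduct, Fin.sum_univ_three]
    rw [he]
    exact (((hFi 0).mul (hFi 0)).add ((hFi 1).mul (hFi 1))).add ((hFi 2).mul (hFi 2))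
  have hzero : fderiv ℝ (fun y => n y ⬝ᵥ n y) x = 0 := by
    have heq : (fun y => n y ⬝ᵥ n y) =ᶠ[nhds x] fun _ => (1:ℝ) :=
      Filter.eventuallyEq_of_mem hmem hunit
    rw [heq.fderiv_eq]
    exact fderiv_const_apply 1
  have hG : (((a • ((ContinuousLinearMap.proj (0:Fin 3)).comp F)
        + a • ((ContinuousLinearMap.proj (0:Fin 3)).comp F))
        + (b • ((ContinuousLinearMap.proj (1:Fin 3)).comp F)
        + b • ((ContinuousLinearMap.proj (1:Fin 3)).comp F)))
        + (c • ((ContinuousLinearMap.proj (2:Fin 3)).comp F)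
        + c • ((ContinuousLinearMap.proj (2:Fin 3)).comp F))) = 0 :=
    hsq.fderiv.symm.trans hzero
  have hu : a * u0 + b * u1 + c * u2 = 0 := by
    have h0 := congrArg (fun L => L ((1:ℝ),(0:ℝ))) hG
    simp only [ContinuousLinearMap.add_apply, ContinuousLinearMap.smul_apply,
      ContinuousLinearMap.comp_apply, ContinuousLinearMap.proj_apply,
      ContinuousLinearMap.zero_apply, smul_eq_mul] at h0
    linarith
  have hv : a * v0 + b * v1 + c * v2 = 0 := by
    have h0 := congrArg (fun L => L ((0:ℝ),(1:ℝ))) hG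
    simp only [ContinuousLinearMap.add_apply, ContinuousLinearMap.smul_apply,
      ContinuousLinearMap.comp_apply, ContinuousLinearMap.proj_apply,
      ContinuousLinearMap.zero_apply, smul_eq_mul] at h0
    linarith
  -- nonvanishing denominator
  have hs : (0:ℝ) < 1 + c := by have := hpole x hx; linarith
  have hden : ((1:ℂ) + (c:ℂ)) ≠ 0 := by
    rw [show ((1:ℂ) + (c:ℂ)) = ((1 + c : ℝ) : ℂ) by push_cast; ring]
    exact Complex.ofReal_ne_zero.mpr (by linarith)
  -- derivative of wproj
  have hC : ∀ i : Fin 3, HasFDerivAt (fun y => ((n y i : ℝ) : ℂ))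
      (Complex.ofRealCLM.comp ((ContinuousLinearMap.proj i).comp F)) x := fun i =>
    (Complex.ofRealCLM.hasFDerivAt.comp x (hFi i) : )
  have hNum : HasFDerivAt (fun y => ((n y 0 : ℝ):ℂ) + ((n y 1 : ℝ):ℂ) * Complex.I)
      ((Complex.ofRealCLM.comp ((ContinuousLinearMap.proj (0:Fin 3)).comp F))
        + Complex.I • (Complex.ofRealCLM.comp ((ContinuousLinearMap.proj (1:Fin 3)).comp F))) x :=
    (hC 0).add ((hC 1).mul_const Complex.I)
  have hDen : HasFDerivAt (fun y => (1:ℂ) + ((n y 2 : ℝ):ℂ))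
      (Complex.ofRealCLM.comp ((ContinuousLinearMap.proj (2:Fin 3)).comp F)) x :=
    (hC 2).const_add 1
  have hInv : HasFDerivAt (fun y => ((1:ℂ) + ((n y 2:ℝ):ℂ))⁻¹)
      (((ContinuousLinearMap.smulRight (1 : ℂ →L[ℂ] ℂ)
          (-(((1:ℂ) + (c:ℂ)) ^ 2)⁻¹)).restrictScalars ℝ).comp
        (Complex.ofRealCLM.comp ((ContinuousLinearMap.proj (2:Fin 3)).comp F))) x :=
    ((hasFDerivAt_inv hden).restrictScalars ℝ).comp x hDen
  have hwe : wproj n = fun y =>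
      (((n y 0:ℝ):ℂ) + ((n y 1:ℝ):ℂ) * Complex.I) * (((1:ℂ) + ((n y 2:ℝ):ℂ))⁻¹) := by
    funext y; simp [wproj, div_eq_mul_inv]
  have hw : HasFDerivAt (wproj n)
      ((((a:ℂ) + (b:ℂ) * Complex.I) •
          ((((ContinuousLinearMap.smulRight (1 : ℂ →L[ℂ] ℂ)
              (-(((1:ℂ) + (c:ℂ)) ^ 2)⁻¹)).restrictScalars ℝ).comp
            (Complex.ofRealCLM.comp ((ContinuousLinearMap.proj (2:Fin 3)).comp F)))))
        + (((1:ℂ) + (c:ℂ))⁻¹ •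
          ((Complex.ofRealCLM.comp ((ContinuousLinearMap.proj (0:Fin 3)).comp F))
            + Complex.I • (Complex.ofRealCLM.comp
                ((ContinuousLinearMap.proj (1:Fin 3)).comp F))))) x := by
    rw [hwe]
    exact hNum.mul hInv
  have hP1 : pdC1 (wproj n) x
      = ((a:ℂ) + (b:ℂ) * Complex.I) * ((u2:ℂ) * (-(((1:ℂ) + (c:ℂ)) ^ 2)⁻¹))
        + ((1:ℂ) + (c:ℂ))⁻¹ * ((u0:ℂ) + Complex.I * (u1:ℂ)) := by
    rw [pdC1, hw.fderiv]
    simp [ContinuousLinearMap.add_apply, ContinuousLinearMap.smul_apply,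
      ContinuousLinearMap.comp_apply, ContinuousLinearMap.smulRight_apply,
      ContinuousLinearMap.proj_apply, ContinuousLinearMap.coe_restrictScalars',
      Complex.ofRealCLM_apply, smul_eq_mul]
    ring
  have hP2 : pdC2 (wproj n) x
      = ((a:ℂ) + (b:ℂ) * Complex.I) * ((v2:ℂ) * (-(((1:ℂ) + (c:ℂ)) ^ 2)⁻¹))
        + ((1:ℂ) + (c:ℂ))⁻¹ * ((v0:ℂ) + Complex.I * (v1:ℂ)) := by
    rw [pdC2, hw.fderiv]
    simp [ContinuousLinearMap.add_apply, ContinuousLinearMap.smul_apply,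
      ContinuousLinearMap.comp_apply, ContinuousLinearMap.smulRight_apply,
      ContinuousLinearMap.proj_apply, ContinuousLinearMap.coe_restrictScalars',
      Complex.ofRealCLM_apply, smul_eq_mul]
    ring
  -- rescaled derivatives
  have hQ1 : (((1:ℂ) + (c:ℂ))^2) * pdC1 (wproj n) x
      = ((1:ℂ)+(c:ℂ)) * ((u0:ℂ) + (u1:ℂ) * Complex.I) - ((a:ℂ) + (b:ℂ)*Complex.I) * (u2:ℂ) := by
    rw [hP1]; field_simp; ring
  have hQ2 : (((1:ℂ) + (c:ℂ))^2) * pdC2 (wproj n) x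
      = ((1:ℂ)+(c:ℂ)) * ((v0:ℂ) + (v1:ℂ) * Complex.I) - ((a:ℂ) + (b:ℂ)*Complex.I) * (v2:ℂ) := by
    rw [hP2]; field_simp; ring
  -- CR pair as a single complex equation
  have hCR : ((pdC1 (wproj n) x).re = (pdC2 (wproj n) x).im
        ∧ (pdC2 (wproj n) x).re = -(pdC1 (wproj n) x).im)
      ↔ pdC2 (wproj n) x = Complex.I * pdC1 (wproj n) x := by
    rw [Complex.ext_iff]
    simp only [Complex.mul_re, Complex.mul_im, Complex.I_re, Complex.I_im]
    constructor
    · rintro ⟨h1, h2⟩; constructor <;> linarith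
    · rintro ⟨h1, h2⟩; constructor <;> linarith
  have hsq2 : (((1:ℂ) + (c:ℂ))^2) ≠ 0 := pow_ne_zero 2 hden
  have hscale : (pdC2 (wproj n) x = Complex.I * pdC1 (wproj n) x)
      ↔ (((1:ℂ)+(c:ℂ)) * ((v0:ℂ) + (v1:ℂ) * Complex.I) - ((a:ℂ) + (b:ℂ)*Complex.I) * (v2:ℂ)
        = Complex.I * (((1:ℂ)+(c:ℂ)) * ((u0:ℂ) + (u1:ℂ) * Complex.I)
          - ((a:ℂ) + (b:ℂ)*Complex.I) * (u2:ℂ))) := by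
    rw [← hQ1, ← hQ2]
    constructor
    · intro h; rw [h]; ring
    · intro h
      have h' : (((1:ℂ)+(c:ℂ))^2) * pdC2 (wproj n) x
          = (((1:ℂ)+(c:ℂ))^2) * (Complex.I * pdC1 (wproj n) x) := by
        rw [h]; ring
      exact mul_left_cancel₀ hsq2 h'
  -- the complex equation as two real equations
  have hreal : (((1:ℂ)+(c:ℂ)) * ((v0:ℂ) + (v1:ℂ) * Complex.I) - ((a:ℂ) + (b:ℂ)*Complex.I) * (v2:ℂ)
        = Complex.I * (((1:ℂ)+(c:ℂ)) * ((u0:ℂ) + (u1:ℂ) * Complex.I)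
          - ((a:ℂ) + (b:ℂ)*Complex.I) * (u2:ℂ)))
      ↔ ((1+c) * v0 - a * v2 = b * u2 - (1+c) * u1
          ∧ (1+c) * v1 - b * v2 = (1+c) * u0 - a * u2) := by
    rw [Complex.ext_iff]
    simp only [Complex.add_re, Complex.add_im, Complex.sub_re, Complex.sub_im,
      Complex.mul_re, Complex.mul_im, Complex.I_re, Complex.I_im, Complex.one_re,
      Complex.one_im, Complex.ofReal_re, Complex.ofReal_im, mul_zero, zero_mul,
      mul_one, one_mul, sub_zero, zero_sub, add_zero, zero_add, neg_zero, neg_neg]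
    constructor
    · rintro ⟨h1, h2⟩; constructor <;> linarith
    · rintro ⟨h1, h2⟩; constructor <;> linarith
  -- cross product equation componentwise
  have hcross : (pd2 n x = n x ⨯₃ pd1 n x)
      ↔ (v0 = b * u2 - c * u1 ∧ v1 = c * u0 - a * u2 ∧ v2 = a * u1 - b * u0) := by
    have hpd1 : pd1 n x = F (1,0) := rfl
    have hpd2 : pd2 n x = F (0,1) := rfl
    rw [hpd1, hpd2, cross_apply]
    constructor
    · intro h
      refine ⟨?_, ?_, ?_⟩
      · have := congrFun h 0; simpa using this
      · have := congrFun h 1; simpa using this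
      · have := congrFun h 2; simpa using this
    · rintro ⟨h0, h1, h2⟩
      funext i
      fin_cases i
      · simpa using h0
      · simpa using h1
      · simpa using h2
  rw [hcross, hCR, hscale, hreal]
  constructor
  · rintro ⟨h0, h1, h2⟩
    constructor
    · linear_combination (1+c) * h0 - a * h2 + b * hu - u1 * hn
    · linear_combination (1+c) * h1 - b * h2 - a * hu + u0 * hn
  · rintro ⟨h1, h2⟩
    have hc2 : ((1+c)^2 : ℝ) ≠ 0 := by positivity
    refine ⟨?_, ?_, ?_⟩
    · refine mul_left_cancel₀ hc2 ?_
      linear_combination ((1+c)*c + b^2) * h1 - (a*b) * h2 + (a*(1+c)) * hv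
        - ((1+c)*b) * hu + (b*u2 - (1+c)*v0) * hn
    · refine mul_left_cancel₀ hc2 ?_
      linear_combination (-(a*b)) * h1 + ((1+c)*c + a^2) * h2 + (b*(1+c)) * hv
        + ((1+c)*a) * hu - ((1+c)*v1 + a*u2) * hn
    · refine mul_left_cancel₀ hc2 ?_
      linear_combination (-(a*(1+c))) * h1 - (b*(1+c)) * h2 + ((1+c)^2) * hv
        - ((1+c)*v2) * hn
end

section
/- Let a², b², c² > 0, s₊ = (b² + √(b⁴ + 24a²c²))/(4c²), μ = b²s₊, ν = (1/3)b²s₊ + 2a². Let (n, p, q) be an orthonormal basis of ℝ³ and let u₁, u₂ ∈ ℝ³ satisfy u₁·n = u₂·n = 0. Set A = u₁⊗u₁ + u₂⊗u₂ and define b₁ = −√2 s₊ A:(p⊗p − q⊗q), b₂ = −√2 s₊ A:(p⊗q + q⊗p), b₃ = √6 s₊ (|u₁|² + |u₂|²). Then (b₁² + b₂²)/(2μ) + b₃²/(2ν) = s₊² [ (2/μ)|A|² + (3/ν − 1/μ)(|u₁|² + |u₂|²)² ], where |A| is the Frobenius norm of A. Equivalently, the minimum over ρ ∈ ℝ³ of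 ½(μρ₁² + μρ₂² + νρ₃²) + b₁ρ₁ + b₂ρ₂ + b₃ρ₃ equals −s₊²[ (2/μ)|A|² + (3/ν − 1/μ)(|u₁|² + |u₂|²)² ]. -/
open Matrix

/-- Frobenius inner product of 3×3 real matrices: `A : B = tr(Aᵀ B)`. -/
noncomputable def minner (A B : Matrix (Fin 3) (Fin 3) ℝ) : ℝ := (Aᵀ * B).trace

lemma parseval' (n p q : Fin 3 → ℝ)
    (hnn : n ⬝ᵥ n = 1) (hpp : p ⬝ᵥ p = 1) (hqq : q ⬝ᵥ q = 1)
    (hnp : n ⬝ᵥ p = 0) (hnq : n ⬝ᵥ q = 0) (hpq : p ⬝ᵥ q = 0)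
    (v w : Fin 3 → ℝ) :
    v ⬝ᵥ w = (n ⬝ᵥ v) * (n ⬝ᵥ w) + (p ⬝ᵥ v) * (p ⬝ᵥ w) + (q ⬝ᵥ v) * (q ⬝ᵥ w) := by
  simp only [dotProduct, Fin.sum_univ_three] at hnn hpp hqq hnp hnq hpq ⊢
  set M : Matrix (Fin 3) (Fin 3) ℝ := Matrix.of ![n, p, q] with hM
  have hMM : M * Mᵀ = 1 := by
    ext i j
    fin_cases i <;> fin_cases j <;>
      simp [hM, Matrix.mul_apply, Matrix.transpose_apply, Matrix.one_apply,
        Matrix.vecHead, Matrix.vecTail, Fin.sum_univ_three] <;> linarith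
  have hMt : Mᵀ * M = 1 := mul_eq_one_comm.mp hMM
  have key : ∀ i j, n i * n j + p i * p j + q i * q j = (1 : Matrix (Fin 3) (Fin 3) ℝ) i j := by
    intro i j
    have := congrFun (congrFun hMt i) j
    simpa [hM, Matrix.mul_apply, Matrix.transpose_apply, Fin.sum_univ_three] using this
  have e00 := key 0 0; have e01 := key 0 1; have e02 := key 0 2
  have e10 := key 1 0; have e11 := key 1 1; have e12 := key 1 2
  have e20 := key 2 0; have e21 := key 2 1; have e22 := key 2 2
  simp [Matrix.one_apply] at e00 e01 e02 e10 e11 e12 e20 e21 e22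
  linear_combination (-(v 0 * w 0)) * e00 + (-(v 0 * w 1)) * e01 + (-(v 0 * w 2)) * e02
    + (-(v 1 * w 0)) * e10 + (-(v 1 * w 1)) * e11 + (-(v 1 * w 2)) * e12
    + (-(v 2 * w 0)) * e20 + (-(v 2 * w 1)) * e21 + (-(v 2 * w 2)) * e22

lemma trace_vv (u v x y : Fin 3 → ℝ) :
    ((vecMulVec u v)ᵀ * vecMulVec x y).trace = (u ⬝ᵥ x) * (v ⬝ᵥ y) := by
  simp [Matrix.trace, Matrix.diag, Matrix.mul_apply, vecMulVec_apply, dotProduct,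
    Fin.sum_univ_three]
  ring

lemma quad_lb (m b x : ℝ) (hm : 0 < m) :
    -(b ^ 2 / (2 * m)) ≤ (1 / 2) * (m * x ^ 2) + b * x := by
  have h : (1 / 2) * (m * x ^ 2) + b * x + b ^ 2 / (2 * m) = (m * x + b) ^ 2 / (2 * m) := by
    field_simp; ring
  nlinarith [div_nonneg (sq_nonneg (m * x + b)) (by linarith : (0:ℝ) ≤ 2 * m)]

/-- Pointwise identity behind the minimum of the first-order correction energy `H₀[n₀,ρ]`:
with `A = u₁⊗u₁ + u₂⊗u₂` and `b₁, b₂, b₃` the components of `b₀`, one has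
`(b₁² + b₂²)/(2μ) + b₃²/(2ν) = s₊²[(2/μ)|A|² + (3/ν - 1/μ)(|u₁|² + |u₂|²)²]`;
equivalently, the minimum over `ρ ∈ ℝ³` of
`½(μρ₁² + μρ₂² + νρ₃²) + b₁ρ₁ + b₂ρ₂ + b₃ρ₃` equals the negative of that quantity. -/
theorem first_order_correction_minimum
    (a2 b2 c2 : ℝ) (ha : 0 < a2) (hb : 0 < b2) (hc : 0 < c2)
    (splus μ ν : ℝ)
    (hsplus : splus = (b2 + Real.sqrt (b2 ^ 2 + 24 * a2 * c2)) / (4 * c2))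
    (hμ : μ = b2 * splus) (hν : ν = (1 / 3) * b2 * splus + 2 * a2)
    (n p q : Fin 3 → ℝ)
    (hnn : n ⬝ᵥ n = 1) (hpp : p ⬝ᵥ p = 1) (hqq : q ⬝ᵥ q = 1)
    (hnp : n ⬝ᵥ p = 0) (hnq : n ⬝ᵥ q = 0) (hpq : p ⬝ᵥ q = 0)
    (u1 u2 : Fin 3 → ℝ) (hu1 : u1 ⬝ᵥ n = 0) (hu2 : u2 ⬝ᵥ n = 0)
    (A : Matrix (Fin 3) (Fin 3) ℝ) (hA : A = vecMulVec u1 u1 + vecMulVec u2 u2)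
    (bb1 bb2 bb3 : ℝ)
    (hbb1 : bb1 = -(Real.sqrt 2 * splus) * minner A (vecMulVec p p - vecMulVec q q))
    (hbb2 : bb2 = -(Real.sqrt 2 * splus) * minner A (vecMulVec p q + vecMulVec q p))
    (hbb3 : bb3 = Real.sqrt 6 * splus * (u1 ⬝ᵥ u1 + u2 ⬝ᵥ u2)) :
    (bb1 ^ 2 + bb2 ^ 2) / (2 * μ) + bb3 ^ 2 / (2 * ν)
      = splus ^ 2 * ((2 / μ) * minner A A + (3 / ν - 1 / μ) * (u1 ⬝ᵥ u1 + u2 ⬝ᵥ u2) ^ 2)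
    ∧ IsLeast
        {y : ℝ | ∃ ρ : Fin 3 → ℝ,
          y = (1 / 2) * (μ * ρ 0 ^ 2 + μ * ρ 1 ^ 2 + ν * ρ 2 ^ 2)
            + bb1 * ρ 0 + bb2 * ρ 1 + bb3 * ρ 2}
        (-(splus ^ 2 * ((2 / μ) * minner A A
            + (3 / ν - 1 / μ) * (u1 ⬝ᵥ u1 + u2 ⬝ᵥ u2) ^ 2))) := by
  -- positivity of splus, μ, ν
  have hsp : 0 < splus := by
    rw [hsplus]
    have h1 : 0 ≤ Real.sqrt (b2 ^ 2 + 24 * a2 * c2) := Real.sqrt_nonneg _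
    positivity
  have hμ0 : 0 < μ := by rw [hμ]; positivity
  have hν0 : 0 < ν := by rw [hν]; positivity
  -- coordinates in the (p,q) plane
  set a1 : ℝ := p ⬝ᵥ u1 with ha1
  set c1 : ℝ := q ⬝ᵥ u1 with hc1
  set a2' : ℝ := p ⬝ᵥ u2 with ha2'
  set c2' : ℝ := q ⬝ᵥ u2 with hc2'
  have hn1 : n ⬝ᵥ u1 = 0 := by rw [dotProduct_comm]; exact hu1
  have hn2 : n ⬝ᵥ u2 = 0 := by rw [dotProduct_comm]; exact hu2
  have h11 : u1 ⬝ᵥ u1 = a1 * a1 + c1 * c1 := by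
    have := parseval' n p q hnn hpp hqq hnp hnq hpq u1 u1
    rw [hn1] at this; linarith
  have h22 : u2 ⬝ᵥ u2 = a2' * a2' + c2' * c2' := by
    have := parseval' n p q hnn hpp hqq hnp hnq hpq u2 u2
    rw [hn2] at this; linarith
  have h12 : u1 ⬝ᵥ u2 = a1 * a2' + c1 * c2' := by
    have := parseval' n p q hnn hpp hqq hnp hnq hpq u1 u2
    rw [hn1, hn2] at this; linarith
  have h21 : u2 ⬝ᵥ u1 = a1 * a2' + c1 * c2' := by rw [dotProduct_comm]; exact h12
  have hu1p : u1 ⬝ᵥ p = a1 := by rw [dotProduct_comm]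
  have hu1q : u1 ⬝ᵥ q = c1 := by rw [dotProduct_comm]
  have hu2p : u2 ⬝ᵥ p = a2' := by rw [dotProduct_comm]
  have hu2q : u2 ⬝ᵥ q = c2' := by rw [dotProduct_comm]
  -- minner computations
  have mAA : minner A A
      = (a1 * a1 + c1 * c1) ^ 2 + 2 * (a1 * a2' + c1 * c2') ^ 2 + (a2' * a2' + c2' * c2') ^ 2 := by
    simp only [hA, minner, Matrix.transpose_add, Matrix.add_mul, Matrix.mul_add,
      Matrix.trace_add, trace_vv, h11, h22, h12, h21]
    ring
  have m1 : minner A (vecMulVec p p - vecMulVec q q)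
      = a1 * a1 - c1 * c1 + (a2' * a2' - c2' * c2') := by
    simp only [hA, minner, Matrix.transpose_add, Matrix.add_mul, Matrix.mul_sub,
      Matrix.mul_add, Matrix.trace_add, Matrix.trace_sub, trace_vv, hu1p, hu1q, hu2p, hu2q]
    ring
  have m2 : minner A (vecMulVec p q + vecMulVec q p)
      = 2 * (a1 * c1 + a2' * c2') := by
    simp only [hA, minner, Matrix.transpose_add, Matrix.add_mul, Matrix.mul_add,
      Matrix.trace_add, trace_vv, hu1p, hu1q, hu2p, hu2q]
    ring
  -- squares of the bb's (eliminating the square roots)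
  have sq2 : Real.sqrt 2 ^ 2 = 2 := Real.sq_sqrt (by norm_num)
  have sq6 : Real.sqrt 6 ^ 2 = 6 := Real.sq_sqrt (by norm_num)
  have eb1 : bb1 ^ 2 = 2 * splus ^ 2 * (a1 * a1 - c1 * c1 + (a2' * a2' - c2' * c2')) ^ 2 := by
    rw [hbb1, m1,
      show (-(Real.sqrt 2 * splus) * (a1 * a1 - c1 * c1 + (a2' * a2' - c2' * c2'))) ^ 2
        = Real.sqrt 2 ^ 2 * (splus ^ 2 * (a1 * a1 - c1 * c1 + (a2' * a2' - c2' * c2')) ^ 2)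
        from by ring, sq2]
    ring
  have eb2 : bb2 ^ 2 = 2 * splus ^ 2 * (2 * (a1 * c1 + a2' * c2')) ^ 2 := by
    rw [hbb2, m2,
      show (-(Real.sqrt 2 * splus) * (2 * (a1 * c1 + a2' * c2'))) ^ 2
        = Real.sqrt 2 ^ 2 * (splus ^ 2 * (2 * (a1 * c1 + a2' * c2')) ^ 2) from by ring, sq2]
    ring
  have eb3 : bb3 ^ 2 = 6 * splus ^ 2 * ((a1 * a1 + c1 * c1) + (a2' * a2' + c2' * c2')) ^ 2 := by
    rw [hbb3, h11, h22,
      show (Real.sqrt 6 * splus * (a1 * a1 + c1 * c1 + (a2' * a2' + c2' * c2'))) ^ 2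
        = Real.sqrt 6 ^ 2 * (splus ^ 2 * (a1 * a1 + c1 * c1 + (a2' * a2' + c2' * c2')) ^ 2)
        from by ring, sq6]
    ring
  have hμ0' : μ ≠ 0 := ne_of_gt hμ0
  have hν0' : ν ≠ 0 := ne_of_gt hν0
  -- Part 1
  have part1 : (bb1 ^ 2 + bb2 ^ 2) / (2 * μ) + bb3 ^ 2 / (2 * ν)
      = splus ^ 2 * ((2 / μ) * minner A A + (3 / ν - 1 / μ) * (u1 ⬝ᵥ u1 + u2 ⬝ᵥ u2) ^ 2) := by
    rw [eb1, eb2, eb3, mAA, h11, h22]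
    field_simp
    ring
  refine ⟨part1, ?_, ?_⟩
  · -- membership: the minimizer
    refine ⟨![-bb1 / μ, -bb2 / μ, -bb3 / ν], ?_⟩
    have : (1 / 2) * (μ * (-bb1 / μ) ^ 2 + μ * (-bb2 / μ) ^ 2 + ν * (-bb3 / ν) ^ 2)
        + bb1 * (-bb1 / μ) + bb2 * (-bb2 / μ) + bb3 * (-bb3 / ν)
        = -((bb1 ^ 2 + bb2 ^ 2) / (2 * μ) + bb3 ^ 2 / (2 * ν)) := by
      field_simp
      ring
    simp only [Matrix.cons_val_zero, Matrix.cons_val_one, Matrix.head_cons,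
      Matrix.cons_val_two, Matrix.tail_cons]
    rw [this, part1]
  · -- lower bound
    rintro y ⟨ρ, rfl⟩
    have l1 := quad_lb μ bb1 (ρ 0) hμ0
    have l2 := quad_lb μ bb2 (ρ 1) hμ0
    have l3 := quad_lb ν bb3 (ρ 2) hν0
    have : -(splus ^ 2 * ((2 / μ) * minner A A
        + (3 / ν - 1 / μ) * (u1 ⬝ᵥ u1 + u2 ⬝ᵥ u2) ^ 2))
        = -(bb1 ^ 2 / (2 * μ)) + -(bb2 ^ 2 / (2 * μ)) + -(bb3 ^ 2 / (2 * ν)) := by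
      rw [← part1]; ring
    rw [this]
    have expand : (1 / 2) * (μ * ρ 0 ^ 2 + μ * ρ 1 ^ 2 + ν * ρ 2 ^ 2)
        + bb1 * ρ 0 + bb2 * ρ 1 + bb3 * ρ 2
        = ((1 / 2) * (μ * ρ 0 ^ 2) + bb1 * ρ 0) + ((1 / 2) * (μ * ρ 1 ^ 2) + bb2 * ρ 1)
          + ((1 / 2) * (ν * ρ 2 ^ 2) + bb3 * ρ 2) := by ring
    rw [expand]
    exact add_le_add (add_le_add l1 l2) l3
end

section
/- Let a², b², c² > 0, s₊ = (b² + √(b⁴ + 24a²c²))/(4c²), μ = b²s₊, ν = (1/3)b²s₊ + 2a². Let (n, p, q) be an orthonormal basis of ℝ³, let u₁ ∈ ℝ³ with u₁·n = 0, and set u₂ = n × u₁ (the conformal relation). Set A = u₁⊗u₁ + u₂⊗u₂ and define b₁ = −√2 s₊ A:(p⊗p − q⊗q), b₂ = −√2 s₊ A:(p⊗q + q⊗p), b₃ = √6 s₊ (|u₁|² + |u₂|²). Then b₁ = 0 and b₂ = 0 (i.e. A:(p⊗p − q⊗q) = 0 and A:(p⊗q + q⊗p) = 0), and (b₁² + b₂²)/(2μ)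 + b₃²/(2ν) = (3/ν) s₊² (|u₁|² + |u₂|²)² = (12/ν) s₊² |u₁|⁴. -/
open Matrix

lemma minner_vmv (a b c d : Fin 3 → ℝ) :
    minner (vecMulVec a b) (vecMulVec c d) = (a ⬝ᵥ c) * (b ⬝ᵥ d) := by
  simp [minner, vecMulVec, Matrix.trace, Matrix.mul_apply, Matrix.diag, dotProduct,
    Fin.sum_univ_succ]
  ring

lemma minner_add_left (X Y Z : Matrix (Fin 3) (Fin 3) ℝ) :
    minner (X + Y) Z = minner X Z + minner Y Z := by
  simp [minner, Matrix.transpose_add, Matrix.add_mul]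

lemma minner_add_right (X Y Z : Matrix (Fin 3) (Fin 3) ℝ) :
    minner X (Y + Z) = minner X Y + minner X Z := by
  simp [minner, Matrix.mul_add]

lemma minner_sub_right (X Y Z : Matrix (Fin 3) (Fin 3) ℝ) :
    minner X (Y - Z) = minner X Y - minner X Z := by
  simp [minner, Matrix.mul_sub]

lemma decomp (n p q : Fin 3 → ℝ)
    (hnn : n ⬝ᵥ n = 1) (hpp : p ⬝ᵥ p = 1) (hqq : q ⬝ᵥ q = 1)
    (hnp : n ⬝ᵥ p = 0) (hnq : n ⬝ᵥ q = 0) (hpq : p ⬝ᵥ q = 0)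
    (w : Fin 3 → ℝ) : w = (w ⬝ᵥ n) • n + (w ⬝ᵥ p) • p + (w ⬝ᵥ q) • q := by
  simp only [dotProduct, Fin.sum_univ_three] at hnn hpp hqq hnp hnq hpq
  set M : Matrix (Fin 3) (Fin 3) ℝ :=
    !![n 0, n 1, n 2; p 0, p 1, p 2; q 0, q 1, q 2] with hM
  set N : Matrix (Fin 3) (Fin 3) ℝ :=
    !![n 0, p 0, q 0; n 1, p 1, q 1; n 2, p 2, q 2] with hN
  have hMN : Mᵀ = N := by
    ext i j; fin_cases i <;> fin_cases j <;> rfl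
  have h1 : M * Mᵀ = 1 := by
    rw [hMN]
    ext i j
    fin_cases i <;> fin_cases j <;>
      simp [hM, hN, Matrix.mul_apply, Fin.sum_univ_three, Matrix.one_apply] <;>
      linarith
  have h2 : Mᵀ * M = 1 := mul_eq_one_comm.mp h1
  rw [hMN] at h2
  have h3 : ∀ i j, n i * n j + (p i * p j + q i * q j) = if i = j then 1 else 0 := by
    intro i j
    have := congrFun (congrFun h2 i) j
    fin_cases i <;> fin_cases j <;>
      simp [hM, hN, Matrix.mul_apply, Fin.sum_univ_three, Matrix.one_apply] at this ⊢ <;>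
      linarith
  funext i
  have key : ∑ j, (n i * n j + (p i * p j + q i * q j)) * w j
      = ∑ j, (if i = j then (1:ℝ) else 0) * w j := by
    refine Finset.sum_congr rfl fun j _ => ?_
    rw [h3 i j]
  simp only [ite_mul, one_mul, zero_mul, Finset.sum_ite_eq, Finset.mem_univ,
    if_true, Fin.sum_univ_three] at key
  simp only [Pi.add_apply, Pi.smul_apply, smul_eq_mul, dotProduct, Fin.sum_univ_three]
  linear_combination -key

/-- In the conformal case `u₂ = n × u₁`, the biaxial components `b₁, b₂` of the
first-order correction vanish, and the correction energy density reduces to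
`(3/ν) s₊² (|u₁|² + |u₂|²)² = (12/ν) s₊² |u₁|⁴`. -/
theorem first_order_correction_conformal
    (a2 b2 c2 : ℝ) (ha : 0 < a2) (hb : 0 < b2) (hc : 0 < c2)
    (splus μ ν : ℝ)
    (hsplus : splus = (b2 + Real.sqrt (b2 ^ 2 + 24 * a2 * c2)) / (4 * c2))
    (hμ : μ = b2 * splus) (hν : ν = (1 / 3) * b2 * splus + 2 * a2)
    (n p q : Fin 3 → ℝ)
    (hnn : n ⬝ᵥ n = 1) (hpp : p ⬝ᵥ p = 1) (hqq : q ⬝ᵥ q = 1)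
    (hnp : n ⬝ᵥ p = 0) (hnq : n ⬝ᵥ q = 0) (hpq : p ⬝ᵥ q = 0)
    (u1 u2 : Fin 3 → ℝ) (hu1 : u1 ⬝ᵥ n = 0) (hu2 : u2 = n ⨯₃ u1)
    (A : Matrix (Fin 3) (Fin 3) ℝ) (hA : A = vecMulVec u1 u1 + vecMulVec u2 u2)
    (bb1 bb2 bb3 : ℝ)
    (hbb1 : bb1 = -(Real.sqrt 2 * splus) * minner A (vecMulVec p p - vecMulVec q q))
    (hbb2 : bb2 = -(Real.sqrt 2 * splus) * minner A (vecMulVec p q + vecMulVec q p))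
    (hbb3 : bb3 = Real.sqrt 6 * splus * (u1 ⬝ᵥ u1 + u2 ⬝ᵥ u2)) :
    bb1 = 0 ∧ bb2 = 0
    ∧ (bb1 ^ 2 + bb2 ^ 2) / (2 * μ) + bb3 ^ 2 / (2 * ν)
        = (3 / ν) * splus ^ 2 * (u1 ⬝ᵥ u1 + u2 ⬝ᵥ u2) ^ 2
    ∧ (3 / ν) * splus ^ 2 * (u1 ⬝ᵥ u1 + u2 ⬝ᵥ u2) ^ 2
        = (12 / ν) * splus ^ 2 * (u1 ⬝ᵥ u1) ^ 2 := by
  have dec := decomp n p q hnn hpp hqq hnp hnq hpq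
  have hqp : q ⬝ᵥ p = 0 := by rw [dotProduct_comm]; exact hpq
  set α := u1 ⬝ᵥ p with hα
  set β := u1 ⬝ᵥ q with hβ
  set ε := (n ⨯₃ p) ⬝ᵥ q with hε
  -- decomposition of u1
  have hu1d : u1 = α • p + β • q := by
    have h := dec u1
    rw [hu1, zero_smul, zero_add] at h
    exact h
  -- n × p = ε q
  have c1 : (n ⨯₃ p) ⬝ᵥ n = 0 := by
    simp [crossProduct, dotProduct, Fin.sum_univ_three]; ring
  have c2' : (n ⨯₃ p) ⬝ᵥ p = 0 := by
    simp [crossProduct, dotProduct, Fin.sum_univ_three]; ring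
  have hcnp : n ⨯₃ p = ε • q := by
    have h := dec (n ⨯₃ p)
    rw [c1, c2', zero_smul, zero_smul, zero_add, zero_add] at h
    exact h
  -- n × q = -ε p
  have c3 : (n ⨯₃ q) ⬝ᵥ n = 0 := by
    simp [crossProduct, dotProduct, Fin.sum_univ_three]; ring
  have c4 : (n ⨯₃ q) ⬝ᵥ q = 0 := by
    simp [crossProduct, dotProduct, Fin.sum_univ_three]; ring
  have c5 : (n ⨯₃ q) ⬝ᵥ p = -ε := by
    rw [hε]
    simp [crossProduct, dotProduct, Fin.sum_univ_three]; ring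
  have hcnq : n ⨯₃ q = (-ε) • p := by
    have h := dec (n ⨯₃ q)
    rw [c3, c4, c5, zero_smul, zero_smul, zero_add, add_zero] at h
    exact h
  -- ε² = 1
  have lag : (n ⨯₃ p) ⬝ᵥ (n ⨯₃ p) = (n ⬝ᵥ n) * (p ⬝ᵥ p) - (n ⬝ᵥ p) ^ 2 := by
    simp [crossProduct, dotProduct, Fin.sum_univ_three]; ring
  have hε2 : ε ^ 2 = 1 := by
    rw [hcnp] at lag
    rw [hnn, hpp, hnp] at lag
    simp [dotProduct_smul, smul_dotProduct, hqq] at lag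
    linear_combination lag
  -- u2 decomposition
  have hu2d : u2 = (-(β * ε)) • p + (α * ε) • q := by
    rw [hu2, hu1d]
    rw [map_add, LinearMap.map_smul, LinearMap.map_smul, hcnp, hcnq]
    module
  -- dot products
  have e3 : u2 ⬝ᵥ p = -(β * ε) := by
    rw [hu2d]
    simp [add_dotProduct, smul_dotProduct, hpp, hqp]
  have e4 : u2 ⬝ᵥ q = α * ε := by
    rw [hu2d]
    simp [add_dotProduct, smul_dotProduct, hqq, hpq]
  have e5 : u1 ⬝ᵥ u1 = α ^ 2 + β ^ 2 := by
    conv_lhs => rw [hu1d]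
    simp [add_dotProduct, smul_dotProduct, dotProduct_add, dotProduct_smul,
      hpp, hqq, hpq, hqp]
    ring
  have e6 : u2 ⬝ᵥ u2 = α ^ 2 + β ^ 2 := by
    conv_lhs => rw [hu2d]
    simp [add_dotProduct, smul_dotProduct, dotProduct_add, dotProduct_smul,
      hpp, hqq, hpq, hqp]
    linear_combination (α ^ 2 + β ^ 2) * hε2
  -- biaxial components vanish
  have hb1 : bb1 = 0 := by
    rw [hbb1, hA, minner_add_left, minner_sub_right, minner_sub_right,
      minner_vmv, minner_vmv, minner_vmv, minner_vmv, ← hα, ← hβ, e3, e4]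
    linear_combination (Real.sqrt 2 * splus) * (α ^ 2 - β ^ 2) * hε2
  have hb2 : bb2 = 0 := by
    rw [hbb2, hA, minner_add_left, minner_add_right, minner_add_right,
      minner_vmv, minner_vmv, minner_vmv, minner_vmv, ← hα, ← hβ, e3, e4]
    linear_combination 2 * (Real.sqrt 2 * splus) * α * β * hε2
  -- positivity of ν
  have hsp : 0 < splus := by
    rw [hsplus]
    have : 0 ≤ Real.sqrt (b2 ^ 2 + 24 * a2 * c2) := Real.sqrt_nonneg _
    positivity
  have hνpos : 0 < ν := by rw [hν]; positivity
  have hνne : ν ≠ 0 := ne_of_gt hνpos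
  refine ⟨hb1, hb2, ?_, ?_⟩
  · have hμpos : 0 < μ := by rw [hμ]; positivity
    have hμne : μ ≠ 0 := ne_of_gt hμpos
    rw [hb1, hb2, hbb3, mul_pow, mul_pow, Real.sq_sqrt (by norm_num : (0:ℝ) ≤ 6)]
    field_simp
    ring
  · rw [e5, e6]; ring
end
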